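/- arXiv:0712.2678 — 6 statements merged into one kernel-verified Lean document; each statement's English description precedes it below -/
import Mathlib

section
/- Let D be a connected acyclic digraph with vertex set V, and let H be a connected convex set of vertices with H ≠ V. Then there exists a vertex v ∈ V \ H such that H ∪ {v} is a connected convex set in D. -/
/-!
Digraphs are given by an arc relation `A : V → V → Prop` on a vertex type `V`.
A directed path from `a` to `b` is encoded as `a :: (l ++ [b])` where the list
satisfies `List.Chain A` (consecutive arcs) and `List.Nodup` (distinct vertices);
`l` is the list of internal vertices.
-/

variable {V : Type*}

/-- A non-empty vertex set `X` is convex if no directed path between two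
vertices of `X` contains a vertex not in `X`. -/
def ConvexIn (A : V → V → Prop) (X : Set V) : Prop :=
  X.Nonempty ∧ ∀ a b : V, ∀ l : List V, a ∈ X → b ∈ X →
    List.Chain A a (l ++ [b]) → (a :: (l ++ [b])).Nodup → ∀ w ∈ l, w ∈ X

/-- A vertex set is connected if the underlying undirected graph induced on it
is connected. -/
def ConnectedIn (A : V → V → Prop) (X : Set V) : Prop :=
  ((SimpleGraph.fromRel A).induce X).Connected

/-- A digraph is acyclic if it has no directed cycle, equivalently no
nontrivial directed closed walk. -/
def AcyclicDigraph (A : V → V → Prop) : Prop :=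
  ∀ v, ¬ Relation.TransGen A v v

/-- A digraph is connected if its underlying undirected graph is connected. -/
def DigraphConnected (A : V → V → Prop) : Prop :=
  (SimpleGraph.fromRel A).Connected

/-- A source is a vertex with in-degree zero. -/
def IsSourceIn (A : V → V → Prop) (v : V) : Prop := ∀ u, ¬ A u v

/-- A sink is a vertex with out-degree zero. -/
def IsSinkIn (A : V → V → Prop) (v : V) : Prop := ∀ u, ¬ A v u

/-- A cut-vertex of a connected digraph: deleting it disconnects the
underlying undirected graph. -/
def IsCutVertexIn (A : V → V → Prop) (v : V) : Prop :=
  ¬ ((SimpleGraph.fromRel A).induce {u | u ≠ v}).Connected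

-- auxiliary lemmas

lemma chain_transGen {A : V → V → Prop} :
    ∀ (l : List V) {a b : V}, List.Chain A a (l ++ [b]) → Relation.TransGen A a b := by
  intro l
  induction l with
  | nil => intro a b h; simp [List.Chain] at h; exact Relation.TransGen.single h
  | cons c l ih =>
      intro a b h
      simp only [List.Chain, List.cons_append, List.chain_cons] at h
      exact Relation.TransGen.head h.1 (ih h.2)

lemma fromRel_flip (A : V → V → Prop) :
    SimpleGraph.fromRel (flip A) = SimpleGraph.fromRel A := by
  ext x y; simp [SimpleGraph.fromRel_adj, flip]; tauto

lemma convexIn_flip {A : V → V → Prop} {X : Set V} (h : ConvexIn A X) :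
    ConvexIn (flip A) X := by
  refine ⟨h.1, fun a b l ha hb hch hnd w hw => ?_⟩
  have hch' : List.Chain A b (l.reverse ++ [a]) := by
    have h1 : List.Chain' (flip A) (a :: (l ++ [b])) := hch
    have h2 : List.Chain' (flip (flip A)) (b :: (l.reverse ++ [a])) := by
      show List.IsChain _ _
      have : (b :: (l.reverse ++ [a])) = (a :: (l ++ [b])).reverse := by simp
      rw [this, List.isChain_reverse]
      exact h1
    exact h2
  have hnd' : (b :: (l.reverse ++ [a])).Nodup := by
    have : (b :: (l.reverse ++ [a])) = (a :: (l ++ [b])).reverse := by simp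
    rw [this, List.nodup_reverse]
    exact hnd
  exact h.2 b a l.reverse hb ha hch' hnd' w (by simpa using hw)

lemma acyclic_flip {A : V → V → Prop} (h : AcyclicDigraph A) : AcyclicDigraph (flip A) := by
  intro v hv
  exact h v (Relation.transGen_swap.mp hv)

lemma noPath_aux {A : V → V → Prop} (hacyc : AcyclicDigraph A) {H : Set V}
    (hHx : ConvexIn A H) {v h₀ : V} (hv : v ∉ H) (hh₀ : h₀ ∈ H) (harc : A v h₀)
    {l : List V} {a : V} (hall : ∀ x ∈ l, x ∉ H) (ha : a ∈ H)
    (hch : List.Chain A a (l ++ [v])) (hnd : (a :: (l ++ [v])).Nodup) : False := by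
  have hne : h₀ ≠ a := by
    intro h
    exact hacyc h₀ (Relation.TransGen.tail (h ▸ chain_transGen l hch) harc)
  have hch2 : List.Chain A a ((l ++ [v]) ++ [h₀]) := by
    have heq : (l ++ [v]) ++ [h₀] = l ++ v :: [h₀] := by simp
    rw [heq]
    simp only [List.Chain]
    rw [List.isChain_cons_split]
    exact ⟨hch, List.chain_cons.mpr ⟨harc, List.Chain.nil⟩⟩
  have h₀nm : h₀ ∉ a :: (l ++ [v]) := by
    intro hmem
    rcases List.mem_cons.mp hmem with h | h
    · exact hne h
    rcases List.mem_append.mp h with h | h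
    · exact hall h₀ h hh₀
    · rw [List.mem_singleton] at h
      exact hv (h ▸ hh₀)
  have hnd2 : (a :: ((l ++ [v]) ++ [h₀])).Nodup := by
    have heq : (a :: ((l ++ [v]) ++ [h₀])) = (a :: (l ++ [v])) ++ [h₀] := by simp
    rw [heq, List.nodup_append]
    refine ⟨hnd, List.nodup_singleton _, ?_⟩
    intro x hx y hy hxy
    rw [List.mem_singleton] at hy
    subst hy; subst hxy
    exact h₀nm hx
  exact hv (hHx.2 a h₀ (l ++ [v]) ha hh₀ hch2 hnd2 v (by simp))

/-- Claim B: no directed path from `H` into `v` when `v ∉ H` has an arc into `H`. -/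
lemma noPathIntoV {A : V → V → Prop} (hacyc : AcyclicDigraph A) {H : Set V}
    (hHx : ConvexIn A H) {v h₀ : V} (hv : v ∉ H) (hh₀ : h₀ ∈ H) (harc : A v h₀) :
    ∀ n (l : List V), l.length ≤ n → ∀ a ∈ H, List.Chain A a (l ++ [v]) →
      (a :: (l ++ [v])).Nodup → False := by
  intro n
  induction n with
  | zero =>
      intro l hl a ha hch hnd
      rw [Nat.le_zero, List.length_eq_zero_iff] at hl
      subst hl
      exact noPath_aux hacyc hHx hv hh₀ harc (by simp) ha hch hnd
  | succ n ih =>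
      intro l hl a ha hch hnd
      by_cases hall : ∀ x ∈ l, x ∉ H
      · exact noPath_aux hacyc hHx hv hh₀ harc hall ha hch hnd
      · push_neg at hall
        obtain ⟨x, hxl, hxH⟩ := hall
        obtain ⟨l₁, l₂, rfl⟩ := List.append_of_mem hxl
        have hch' : List.Chain A x (l₂ ++ [v]) := by
          rw [List.append_assoc, List.cons_append] at hch
          simp only [List.Chain] at hch
          rw [List.isChain_cons_split] at hch
          exact hch.2
        have hnd' : (x :: (l₂ ++ [v])).Nodup := by
          have hsub : (x :: (l₂ ++ [v])).Sublist (a :: ((l₁ ++ x :: l₂) ++ [v])) := by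
            refine List.Sublist.cons _ ?_
            have heq : (l₁ ++ x :: l₂) ++ [v] = l₁ ++ (x :: (l₂ ++ [v])) := by simp
            rw [heq]
            exact List.sublist_append_right _ _
          exact hsub.nodup hnd
        have hlen : l₂.length ≤ n := by
          simp [List.length_append] at hl
          omega
        exact ih l₂ hlen x hxH hch' hnd'

/-- Claim A: a path from `v` to `H` with an internal vertex outside `H` yields a later
    in-neighbour of `H` reachable from `v`. -/
lemma existsN_of_pathFromV {A : V → V → Prop} {H : Set V} {v : V} :
    ∀ n (l : List V), l.length ≤ n → ∀ b ∈ H, List.Chain A v (l ++ [b]) →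
      (∃ w ∈ l, w ∉ H) →
      ∃ w', w' ∉ H ∧ (∃ h ∈ H, A w' h) ∧ Relation.TransGen A v w' := by
  intro n
  induction n with
  | zero =>
      intro l hl b hb hch hw
      rw [Nat.le_zero, List.length_eq_zero_iff] at hl
      subst hl
      simp at hw
  | succ n ih =>
      intro l hl b hb hch hw
      obtain ⟨w, hwl, hwH⟩ := hw
      rcases List.eq_nil_or_concat l with rfl | ⟨l', x, hlx⟩
      · simp at hwl
      rw [List.concat_eq_append] at hlx
      subst hlx
      have hsplit : List.Chain A v (l' ++ [x]) ∧ List.Chain A x [b] := by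
        simp only [List.Chain]
        rw [← List.isChain_cons_split]
        simpa [List.Chain] using hch
      by_cases hxH : x ∈ H
      · have hwl' : w ∈ l' := by
          rcases List.mem_append.mp hwl with h | h
          · exact h
          · simp at h; subst h; exact absurd hxH hwH
        have hlen : l'.length ≤ n := by simp [List.length_append] at hl; omega
        exact ih l' hlen x hxH hsplit.1 ⟨w, hwl', hwH⟩
      · exact ⟨x, hxH, ⟨b, hb, by simpa [List.Chain] using hsplit.2⟩, chain_transGen l' hsplit.1⟩

lemma connectedIn_insert {A : V → V → Prop} {H : Set V} {v x : V}
    (hHc : ConnectedIn A H) (hx : x ∈ H) (hadj : (SimpleGraph.fromRel A).Adj v x) :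
    ConnectedIn A (H ∪ {v}) := by
  classical
  set G := SimpleGraph.fromRel A with hG
  have hsub : H ⊆ H ∪ {v} := Set.subset_union_left
  let ι : (G.induce H) →g (G.induce (H ∪ {v})) :=
    ⟨Set.inclusion hsub, fun {a b} h => h⟩
  have hub : ∀ u : ↑(H ∪ {v}), (G.induce (H ∪ {v})).Reachable u ⟨x, Or.inl hx⟩ := by
    rintro ⟨u, hu | hu⟩
    · exact (hHc.preconnected ⟨u, hu⟩ ⟨x, hx⟩).map ι
    · rw [Set.mem_singleton_iff] at hu
      subst hu
      exact SimpleGraph.Adj.reachable (by exact hadj)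
  show (G.induce (H ∪ {v})).Connected
  haveI : Nonempty ↑(H ∪ {v}) := ⟨⟨x, Or.inl hx⟩⟩
  exact ⟨fun a b => (hub a).trans (hub b).symm⟩

lemma walk_cross {G : SimpleGraph V} {H : Set V} :
    ∀ {a b : V}, G.Walk a b → a ∈ H → b ∉ H → ∃ x ∈ H, ∃ y, y ∉ H ∧ G.Adj x y := by
  intro a b w
  induction w with
  | nil => intro ha hb; exact absurd ha hb
  | @cons u c b hadj p ih =>
      intro ha hb
      by_cases hc : c ∈ H
      · exact ih hc hb
      · exact ⟨u, ha, c, hc, hadj⟩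

/-- Main lemma: extension when there is an arc from outside `H` into `H`. -/
lemma main_lemma [Fintype V] (A : V → V → Prop) (hacyc : AcyclicDigraph A)
    (H : Set V) (hHc : ConnectedIn A H) (hHx : ConvexIn A H)
    (hN : ∃ w h, w ∉ H ∧ h ∈ H ∧ A w h) :
    ∃ v, v ∉ H ∧ ConnectedIn A (H ∪ {v}) ∧ ConvexIn A (H ∪ {v}) := by
  classical
  set N : Set V := {w | w ∉ H ∧ ∃ h ∈ H, A w h} with hNdef
  have hNne : N.Nonempty := by
    obtain ⟨w, h, hw, hh, ha⟩ := hN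
    exact ⟨w, hw, h, hh, ha⟩
  haveI : IsTrans V (fun x y => Relation.TransGen A y x) :=
    ⟨fun a b c hab hbc => hbc.trans hab⟩
  haveI : IsIrrefl V (fun x y => Relation.TransGen A y x) := ⟨fun a => hacyc a⟩
  obtain ⟨v, hvN, hvmax⟩ :=
    (Finite.wellFounded_of_trans_of_irrefl (fun x y => Relation.TransGen A y x)).has_min N hNne
  obtain ⟨hvH, h₀, hh₀, harc⟩ := hvN
  have hvmax' : ∀ w ∈ N, ¬ Relation.TransGen A v w := fun w hw h => hvmax w hw h
  refine ⟨v, hvH, ?_, ?_⟩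
  · -- connectivity
    exact connectedIn_insert hHc hh₀
      ((SimpleGraph.fromRel_adj A v h₀).mpr ⟨fun h => hvH (h ▸ hh₀), Or.inl harc⟩)
  · refine ⟨⟨h₀, Or.inl hh₀⟩, fun a b l ha hb hch hnd w hw => ?_⟩
    by_contra hwX
    have hwH : w ∉ H := fun h => hwX (Or.inl h)
    have hwv : w ≠ v := fun h => hwX (Or.inr h)
    rcases ha with ha | ha
    · rcases hb with hb | hb
      · exact hwH (hHx.2 a b l ha hb hch hnd w hw)
      · rw [Set.mem_singleton_iff] at hb; subst hb
        exact noPathIntoV hacyc hHx hvH hh₀ harc l.length l le_rfl a ha hch hnd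
    · rw [Set.mem_singleton_iff] at ha; subst ha
      rcases hb with hb | hb
      · obtain ⟨w', hw'H, hw'N, htg⟩ :=
          existsN_of_pathFromV l.length l le_rfl b hb hch ⟨w, hw, hwH⟩
        exact hvmax' w' ⟨hw'H, hw'N⟩ htg
      · rw [Set.mem_singleton_iff] at hb; subst hb
        simp at hnd

/-- If `H ≠ V` is a connected convex set of a connected acyclic digraph, it can
be extended by one vertex to a connected convex set. -/
theorem stmt_0 {V : Type*} [Fintype V] (A : V → V → Prop)
    (hconn : DigraphConnected A) (hacyc : AcyclicDigraph A)
    (H : Set V) (hHc : ConnectedIn A H) (hHx : ConvexIn A H)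
    (hne : H ≠ Set.univ) :
    ∃ v ∈ Set.univ \ H, ConnectedIn A (H ∪ {v}) ∧ ConvexIn A (H ∪ {v}) := by
  classical
  obtain ⟨y, hy⟩ := (Set.ne_univ_iff_exists_notMem H).mp hne
  obtain ⟨h, hh⟩ := hHx.1
  obtain ⟨x, hx, z, hz, hadj⟩ := walk_cross ((hconn.preconnected h y).some) hh hy
  rw [SimpleGraph.fromRel_adj] at hadj
  rcases hadj.2 with harc | harc
  · -- A x z : arc from H out; use flip
    have hflip : ∃ w h', w ∉ H ∧ h' ∈ H ∧ (flip A) w h' := ⟨z, x, hz, hx, harc⟩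
    have hHcf : ConnectedIn (flip A) H := by unfold ConnectedIn; rw [fromRel_flip]; exact hHc
    obtain ⟨v, hvH, hc, hx'⟩ := main_lemma (flip A) (acyclic_flip hacyc) H hHcf
      (convexIn_flip hHx) hflip
    refine ⟨v, ⟨trivial, hvH⟩, ?_, ?_⟩
    · unfold ConnectedIn at hc ⊢; rwa [fromRel_flip] at hc
    · exact convexIn_flip hx'
  · exact
      let ⟨v, hvH, hc, hx'⟩ := main_lemma A hacyc H hHc hHx ⟨z, x, hz, hx, harc⟩
      ⟨v, ⟨trivial, hvH⟩, hc, hx'⟩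
end

section
/- Every connected acyclic digraph of order n ≥ 2 contains at least two vertices v such that v is a source or a sink of D, and v is not a cut-vertex of D. -/
/-!
Digraphs are given by an arc relation `A : V → V → Prop` on a vertex type `V`.
A directed path from `a` to `b` is encoded as `a :: (l ++ [b])` where the list
satisfies `List.Chain A` (consecutive arcs) and `List.Nodup` (distinct vertices);
`l` is the list of internal vertices.
-/

variable {V : Type*}

universe u

namespace StmtAux

open Relation

/-- Symmetrized arc relation: the underlying undirected adjacency. -/
def ERel (A : V → V → Prop) (u v : V) : Prop := u ≠ v ∧ (A u v ∨ A v u)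

/-- Adjacency restricted to a vertex set. -/
def ERelS (A : V → V → Prop) (X : Set V) (u v : V) : Prop := u ∈ X ∧ v ∈ X ∧ ERel A u v

lemma erel_symm {A : V → V → Prop} {u v : V} (h : ERel A u v) : ERel A v u :=
  ⟨h.1.symm, h.2.symm⟩

lemma erelS_symm {A : V → V → Prop} {X : Set V} {u v : V} (h : ERelS A X u v) : ERelS A X v u :=
  ⟨h.2.1, h.1, erel_symm h.2.2⟩

lemma rtg_symm {r : V → V → Prop} (hs : ∀ {a b}, r a b → r b a) {a b : V}
    (h : ReflTransGen r a b) : ReflTransGen r b a := by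
  induction h with
  | refl => exact .refl
  | tail _ hbc ih => exact .trans (.single (hs hbc)) ih

lemma rtg_subtype {r : V → V → Prop} {X : Set V} {x y : V} (hx : x ∈ X) (hy : y ∈ X) :
    ReflTransGen (fun p q : X => r p q) ⟨x, hx⟩ ⟨y, hy⟩ ↔
      ReflTransGen (fun u v => u ∈ X ∧ v ∈ X ∧ r u v) x y := by
  constructor
  · intro h
    exact ReflTransGen.lift (p := fun u v => u ∈ X ∧ v ∈ X ∧ r u v) (Subtype.val)
      (fun a b hab => ⟨a.2, b.2, hab⟩) _ _ h
  · intro h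
    revert hy
    induction h with
    | refl => intro hy; exact .refl
    | @tail b c hxb hbc ih => intro hy; exact .tail (ih hbc.1) (by exact hbc.2.2)

/-- Bridging lemma: connectivity of the induced underlying graph in terms of
`ReflTransGen` of the restricted symmetric relation. -/
lemma bridge (A : V → V → Prop) (X : Set V) :
    ((SimpleGraph.fromRel A).induce X).Connected ↔
      X.Nonempty ∧ ∀ a ∈ X, ∀ b ∈ X, ReflTransGen (ERelS A X) a b := by
  have hadj : ((SimpleGraph.fromRel A).induce X).Adj = (fun p q : X => ERel A p.1 q.1) := by
    ext p q
    simp [SimpleGraph.fromRel_adj, ERel, Subtype.coe_ne_coe]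
  constructor
  · rw [SimpleGraph.connected_iff]
    rintro ⟨hpre, hne⟩
    refine ⟨Set.nonempty_coe_sort.mp hne, fun a ha b hb => ?_⟩
    have h := (SimpleGraph.reachable_iff_reflTransGen _ _).mp (hpre ⟨a, ha⟩ ⟨b, hb⟩)
    rw [hadj] at h
    exact (rtg_subtype ha hb).mp h
  · rintro ⟨hne, h⟩
    rw [SimpleGraph.connected_iff]
    refine ⟨fun a b => ?_, Set.nonempty_coe_sort.mpr hne⟩
    rw [SimpleGraph.reachable_iff_reflTransGen, hadj]
    have h2 := (rtg_subtype a.2 b.2).mpr (h a a.2 b b.2)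
    convert h2

lemma dconn_iff (A : V → V → Prop) :
    DigraphConnected A ↔ Nonempty V ∧ ∀ a b : V, ReflTransGen (ERel A) a b := by
  rw [DigraphConnected, SimpleGraph.connected_iff]
  have hadj : (SimpleGraph.fromRel A).Adj = ERel A := by
    ext u v; simp [SimpleGraph.fromRel_adj, ERel]
  constructor
  · rintro ⟨hpre, hne⟩
    exact ⟨hne, fun a b => hadj ▸ (SimpleGraph.reachable_iff_reflTransGen a b).mp (hpre a b)⟩
  · rintro ⟨hne, h⟩
    exact ⟨fun a b => (SimpleGraph.reachable_iff_reflTransGen a b).mpr (hadj ▸ h a b), hne⟩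

lemma exists_source_sink [Finite V] [Nonempty V] (A : V → V → Prop) (hacyc : AcyclicDigraph A) :
    (∃ s, IsSourceIn A s) ∧ ∃ t, IsSinkIn A t := by
  haveI i1 : IsTrans V (Relation.TransGen A) := inferInstance
  haveI i2 : IsIrrefl V (Relation.TransGen A) := ⟨hacyc⟩
  haveI i3 : IsTrans V (fun a b => Relation.TransGen A b a) :=
    ⟨fun a b c h1 h2 => i1.trans _ _ _ h2 h1⟩
  haveI i4 : IsIrrefl V (fun a b => Relation.TransGen A b a) := ⟨hacyc⟩
  constructor
  · obtain ⟨m, -, hm⟩ := (Finite.wellFounded_of_trans_of_irrefl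
      (Relation.TransGen A)).has_min Set.univ Set.univ_nonempty
    exact ⟨m, fun u hu => hm u (Set.mem_univ u) (TransGen.single hu)⟩
  · obtain ⟨m, -, hm⟩ := (Finite.wellFounded_of_trans_of_irrefl
      (fun a b => Relation.TransGen A b a)).has_min Set.univ Set.univ_nonempty
    exact ⟨m, fun u hu => hm u (Set.mem_univ u) (TransGen.single hu)⟩

/-- The "component plus cut vertex" relation used to route paths to `c`
while staying inside the component of the starting vertex. -/
def TRel (A : V → V → Prop) (c z : V) (u v : V) : Prop :=
  (u = c ∨ (u ≠ c ∧ ReflTransGen (ERelS A {w | w ≠ c}) z u)) ∧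
  (v = c ∨ (v ≠ c ∧ ReflTransGen (ERelS A {w | w ≠ c}) z v)) ∧ ERel A u v

/-- Any undirected walk from `z ≠ c` to `c` can be rerouted so that it stays
in the component of `z` in `G - c` until it reaches `c`. -/
lemma avoid {A : V → V → Prop} {c : V} :
    ∀ {z : V}, z ≠ c → ReflTransGen (ERel A) z c → ReflTransGen (TRel A c z) z c := by
  intro z hz h
  revert hz
  induction h using ReflTransGen.head_induction_on with
  | refl => intro hz; exact absurd rfl hz
  | @head a w haw hwc ih =>
    intro hz'
    by_cases hw : w = c
    · subst hw
      exact ReflTransGen.single ⟨Or.inr ⟨hz', .refl⟩, Or.inl rfl, haw⟩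
    · have step : ERelS A {w | w ≠ c} a w := ⟨hz', hw, haw⟩
      have ihw := ih hw
      have hmono : ∀ u v, TRel A c w u v → TRel A c a u v := by
        rintro u v ⟨h1, h2, h3⟩
        refine ⟨?_, ?_, h3⟩
        · rcases h1 with h1 | ⟨h1a, h1b⟩
          · exact Or.inl h1
          · exact Or.inr ⟨h1a, .trans (.single step) h1b⟩
        · rcases h2 with h2 | ⟨h2a, h2b⟩
          · exact Or.inl h2
          · exact Or.inr ⟨h2a, .trans (.single step) h2b⟩
      refine ReflTransGen.trans (ReflTransGen.single ?_) (ReflTransGen.mono hmono _ _ ihw)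
      exact ⟨Or.inr ⟨hz', .refl⟩, Or.inr ⟨hw, .single step⟩, haw⟩

/-- `c` has a neighbour in the component of `z`. -/
lemma nbr {A : V → V → Prop} {c z : V} (hz : z ≠ c) (h : ReflTransGen (ERel A) z c) :
    ∃ x, (x ≠ c ∧ ReflTransGen (ERelS A {w | w ≠ c}) z x) ∧ ERel A x c := by
  rcases (avoid hz h).cases_tail with h0 | ⟨m, _, hmc⟩
  · exact absurd h0 hz.symm
  · rcases hmc.1 with h1 | h1
    · exact absurd (h1 ▸ hmc.2.2.1) (fun hh => hh rfl)
    · exact ⟨m, h1, hmc.2.2⟩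



def Good {V : Type*} (A : V → V → Prop) (v w : V) : Prop :=
  v ≠ w ∧ (IsSourceIn A v ∨ IsSinkIn A v) ∧ ¬ IsCutVertexIn A v ∧
    (IsSourceIn A w ∨ IsSinkIn A w) ∧ ¬ IsCutVertexIn A w

lemma comp_good {V : Type u} [Fintype V] {n : ℕ}
    (IH : ∀ (V' : Type u) [Fintype V'] (A' : V' → V' → Prop), Fintype.card V' ≤ n →
      DigraphConnected A' → AcyclicDigraph A' → 2 ≤ Fintype.card V' → ∃ v w, Good A' v w)
    (A : V → V → Prop) (hconn : DigraphConnected A) (hacyc : AcyclicDigraph A)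
    (hcard : Fintype.card V ≤ n + 1) {c a b : V} (ha : a ≠ c) (hb : b ≠ c)
    (hnab : ¬ ReflTransGen (ERelS A {u | u ≠ c}) a b) :
    ∃ v, v ≠ c ∧ ReflTransGen (ERelS A {u | u ≠ c}) a v ∧
      (IsSourceIn A v ∨ IsSinkIn A v) ∧ ¬ IsCutVertexIn A v := by
  classical
  set X : Set V := {u | u ≠ c} with hX
  set C : Set V := {x | x ≠ c ∧ ReflTransGen (ERelS A X) a x} with hC
  set W : Set V := C ∪ {c} with hW
  have haC : a ∈ C := ⟨ha, .refl⟩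
  have hcW : c ∈ W := Or.inr rfl
  have hbW : b ∉ W := by
    rintro (⟨-, hr⟩ | h)
    · exact hnab hr
    · exact hb h
  have hclose : ∀ x ∈ C, ∀ u, ERel A x u → u ≠ c → u ∈ C :=
    fun x hx u he hu => ⟨hu, hx.2.tail ⟨hx.1, hu, he⟩⟩
  have hrtg := ((dconn_iff A).mp hconn).2
  obtain ⟨x₀, hx₀C, hx₀c⟩ := nbr ha (hrtg a c)
  have hchainW : ∀ x, ReflTransGen (ERelS A X) a x → ReflTransGen (ERelS A W) a x := by
    intro x hh
    induction hh with
    | refl => exact .refl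
    | @tail u v hau huv ih =>
      have hu : u ∈ C := ⟨huv.1, hau⟩
      have hv : v ∈ C := ⟨huv.2.1, hau.tail huv⟩
      exact ih.tail ⟨Or.inl hu, Or.inl hv, huv.2.2⟩
  have hac : ReflTransGen (ERelS A W) a c :=
    (hchainW x₀ hx₀C.2).tail ⟨Or.inl hx₀C, hcW, hx₀c⟩
  have hWc : ∀ x ∈ W, ReflTransGen (ERelS A W) x c := by
    rintro x (hx | hx)
    · exact .trans (rtg_symm erelS_symm (hchainW x hx.2)) hac
    · rw [Set.mem_singleton_iff] at hx; subst hx; exact .refl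
  have hWconn : ∀ x ∈ W, ∀ y ∈ W, ReflTransGen (ERelS A W) x y :=
    fun x hx y hy => (hWc x hx).trans (rtg_symm erelS_symm (hWc y hy))
  let A' : ↥W → ↥W → Prop := fun p q => A p q
  have hA'iff : ∀ p q : ↥W, ERel A' p q ↔ ERel A p.1 q.1 := by
    intro p q
    unfold ERel
    rw [Subtype.coe_ne_coe]
  have hconn' : DigraphConnected A' := by
    rw [dconn_iff]
    refine ⟨⟨⟨c, hcW⟩⟩, fun p q => ?_⟩
    have h1 : ReflTransGen (fun u v => u ∈ W ∧ v ∈ W ∧ ERel A u v) p q := hWconn p p.2 q q.2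
    have h2 := (rtg_subtype p.2 q.2).mpr h1
    exact ReflTransGen.mono (fun p q h => (hA'iff p q).mpr h) _ _ h2
  have hacyc' : AcyclicDigraph A' :=
    fun p hp => hacyc p.1 (TransGen.lift Subtype.val (fun _ _ h => h) _ _ hp)
  have hcard2' : 2 ≤ Fintype.card ↥W := by
    haveI : Nontrivial ↥W := ⟨⟨a, Or.inl haC⟩, ⟨c, hcW⟩, by simp [Subtype.ext_iff, ha]⟩
    exact Fintype.one_lt_card_iff_nontrivial.mpr this
  have hcardlt : Fintype.card ↥W ≤ n := by
    have hlt : Fintype.card ↥W < Fintype.card V := by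
      have := Fintype.card_subtype_lt (p := fun x => x ∈ W) (x := b) hbW
      convert this using 2
    omega
  obtain ⟨v', w', hvw', hsv', hcv', hsw', hcw'⟩ := IH ↥W A' hcardlt hconn' hacyc' hcard2'
  have hpick : ∃ x' : ↥W, (x' : V) ≠ c ∧ (IsSourceIn A' x' ∨ IsSinkIn A' x') ∧
      ¬ IsCutVertexIn A' x' := by
    by_cases h : (v' : V) = c
    · refine ⟨w', fun hw => hvw' (Subtype.ext (h.trans hw.symm)), hsw', hcw'⟩
    · exact ⟨v', h, hsv', hcv'⟩
  obtain ⟨x', hxc, hsx', hcx'⟩ := hpick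
  have hxW : (x' : V) ∈ W := x'.2
  have hxC : (x' : V) ∈ C := by
    rcases hxW with h | h
    · exact h
    · exact absurd h hxc
  refine ⟨x', hxc, hxC.2, ?_, ?_⟩
  · -- transfer source/sink
    have harc : ∀ u, (A u x' ∨ A (x' : V) u) → u ∈ W := by
      intro u hu
      by_cases huc : u = c
      · exact Or.inr (by simp [huc])
      · have hne : u ≠ (x' : V) := by
          rintro rfl
          exact hacyc _ (by rcases hu with h | h <;> exact TransGen.single h)
        have herel : ERel A (x' : V) u := ⟨fun h => hne h.symm, hu.symm⟩
        exact Or.inl (hclose _ hxC u herel huc)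
    rcases hsx' with hs | hs
    · left
      intro u hux
      exact hs ⟨u, harc u (Or.inl hux)⟩ hux
    · right
      intro u hxu
      exact hs ⟨u, harc u (Or.inr hxu)⟩ hxu
  · -- transfer non-cut
    intro hcontra
    apply hcontra
    rw [bridge]
    have hconnW' := not_not.mp hcx'
    obtain ⟨-, hY⟩ := (bridge A' {u : ↥W | u ≠ x'}).mp hconnW'
    have hcx : c ≠ (x' : V) := fun h => hxc h.symm
    have hWZ : ∀ y, (hyW : y ∈ W) → y ≠ (x' : V) →
        ReflTransGen (ERelS A {u | u ≠ (x' : V)}) y c := by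
      intro y hyW hyx
      have hp : (⟨y, hyW⟩ : ↥W) ∈ {u : ↥W | u ≠ x'} := fun h => hyx (congrArg Subtype.val h)
      have hq : (⟨c, hcW⟩ : ↥W) ∈ {u : ↥W | u ≠ x'} := fun h => hcx (congrArg Subtype.val h)
      have h3 := hY _ hp _ hq
      exact ReflTransGen.lift (p := ERelS A {u | u ≠ (x' : V)}) Subtype.val
        (by
          rintro p q ⟨h1, h2, h3⟩
          exact ⟨fun h => h1 (Subtype.ext h), fun h => h2 (Subtype.ext h),
            (hA'iff p q).mp h3⟩) _ _ h3
    have hOZ : ∀ y, y ∉ W → ReflTransGen (ERelS A {u | u ≠ (x' : V)}) y c := by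
      intro y hyW
      have hyc : y ≠ c := fun h => hyW (Or.inr (by simp [h]))
      have hyC : y ∉ C := fun h => hyW (Or.inl h)
      have hnex : ∀ u, u ≠ c → ReflTransGen (ERelS A X) y u → u ≠ (x' : V) := by
        rintro u hu hru rfl
        exact hyC ⟨hyc, hxC.2.trans (rtg_symm erelS_symm hru)⟩
      refine ReflTransGen.mono ?_ _ _ (avoid hyc (hrtg y c))
      rintro u v ⟨h1, h2, h3⟩
      refine ⟨?_, ?_, h3⟩
      · rcases h1 with h1 | ⟨h1a, h1b⟩
        · exact h1 ▸ hcx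
        · exact hnex u h1a h1b
      · rcases h2 with h2 | ⟨h2a, h2b⟩
        · exact h2 ▸ hcx
        · exact hnex v h2a h2b
    have hZc : ∀ z, z ≠ (x' : V) → ReflTransGen (ERelS A {u | u ≠ (x' : V)}) z c := by
      intro z hz
      by_cases hzW : z ∈ W
      · exact hWZ z hzW hz
      · exact hOZ z hzW
    exact ⟨⟨c, hcx⟩, fun p hp q hq => (hZc p hp).trans (rtg_symm erelS_symm (hZc q hq))⟩

lemma main : ∀ (n : ℕ) {V : Type u} [Fintype V] (A : V → V → Prop), Fintype.card V ≤ n →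
    DigraphConnected A → AcyclicDigraph A → 2 ≤ Fintype.card V → ∃ v w : V, Good A v w := by
  intro n
  induction n with
  | zero => intro V _ A h1 _ _ h2; omega
  | succ n ih =>
    intro V _ A hcard hconn hacyc h2
    haveI : Nontrivial V := Fintype.one_lt_card_iff_nontrivial.mp h2
    by_cases hcut : ∃ c, IsCutVertexIn A c
    · obtain ⟨c, hc⟩ := hcut
      rw [IsCutVertexIn, bridge] at hc
      push_neg at hc
      have hXne : ({u | u ≠ c} : Set V).Nonempty := by
        obtain ⟨y, hy⟩ := exists_ne c
        exact ⟨y, hy⟩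
      obtain ⟨a, ha, b, hb, hnab⟩ := hc hXne
      have hnba : ¬ ReflTransGen (ERelS A {u | u ≠ c}) b a :=
        fun h => hnab (rtg_symm erelS_symm h)
      obtain ⟨v, hvc, hva, hvs, hvcut⟩ :=
        comp_good (fun V' _ A' => ih A') A hconn hacyc hcard ha hb hnab
      obtain ⟨w, hwc, hwb, hws, hwcut⟩ :=
        comp_good (fun V' _ A' => ih A') A hconn hacyc hcard hb ha hnba
      refine ⟨v, w, ?_, hvs, hvcut, hws, hwcut⟩
      rintro rfl
      exact hnab (hva.trans (rtg_symm erelS_symm hwb))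
    · push_neg at hcut
      obtain ⟨⟨s, hs⟩, ⟨t, ht⟩⟩ := exists_source_sink A hacyc
      have hst : s ≠ t := by
        rintro rfl
        obtain ⟨y, hy⟩ := exists_ne s
        rcases (((dconn_iff A).mp hconn).2 s y).cases_head with h | ⟨u, hsu, -⟩
        · exact hy h.symm
        · rcases hsu.2 with h | h
          · exact ht u h
          · exact hs u h
      exact ⟨s, t, hst, Or.inl hs, hcut s, Or.inr ht, hcut t⟩

end StmtAux

/-- Every connected acyclic digraph of order at least 2 has at least two
non-cut-vertices each of which is a source or a sink. -/
theorem stmt_1 {V : Type*} [Fintype V] (A : V → V → Prop)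
    (hconn : DigraphConnected A) (hacyc : AcyclicDigraph A)
    (hn : 2 ≤ Fintype.card V) :
    ∃ v w : V, v ≠ w ∧
      (IsSourceIn A v ∨ IsSinkIn A v) ∧ ¬ IsCutVertexIn A v ∧
      (IsSourceIn A w ∨ IsSinkIn A w) ∧ ¬ IsCutVertexIn A w := by
  obtain ⟨v, w, h1, h2, h3, h4, h5⟩ :=
    StmtAux.main (Fintype.card V) A le_rfl hconn hacyc hn
  exact ⟨v, w, h1, h2, h3, h4, h5⟩
end

section
/- Let D be a connected acyclic digraph of order n. Then for every k with 1 ≤ k ≤ n, the number of connected convex sets of D of size exactly k is at least n − k + 1. -/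
/-!
Digraphs are given by an arc relation `A : V → V → Prop` on a vertex type `V`.
A directed path from `a` to `b` is encoded as `a :: (l ++ [b])` where the list
satisfies `List.Chain A` (consecutive arcs) and `List.Nodup` (distinct vertices);
`l` is the list of internal vertices.
-/

variable {V : Type*}

namespace Stmt3Aux

/-- symmetrized arc relation restricted to a set -/
def crel (A : V → V → Prop) (T : Set V) (u v : V) : Prop :=
  u ∈ T ∧ v ∈ T ∧ (A u v ∨ A v u)

/-- connectivity of a set -/
def ConnOn (A : V → V → Prop) (X : Set V) : Prop :=
  X.Nonempty ∧ ∀ a ∈ X, ∀ b ∈ X, Relation.ReflTransGen (crel A X) a b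

/-- relative convexity: paths inside the ground set `S` -/
def ConvexOn' (A : V → V → Prop) (S X : Set V) : Prop :=
  ∀ a b : V, ∀ l : List V, a ∈ X → b ∈ X → (∀ w ∈ l, w ∈ S) →
    List.Chain A a (l ++ [b]) → (a :: (l ++ [b])).Nodup → ∀ w ∈ l, w ∈ X

/-- relative source-or-sink -/
def SS (A : V → V → Prop) (S : Set V) (w : V) : Prop :=
  w ∈ S ∧ ((∀ u ∈ S, ¬ A u w) ∨ (∀ u ∈ S, ¬ A w u))

def compOf (A : V → V → Prop) (T : Set V) (a : V) : Set V :=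
  {x | x ∈ T ∧ Relation.ReflTransGen (crel A T) a x}

variable {A : V → V → Prop}

lemma crel_symm (T : Set V) : Symmetric (crel A T) :=
  fun _ _ h => ⟨h.2.1, h.1, h.2.2.symm⟩

lemma rtg_symm {T : Set V} {x y : V} (h : Relation.ReflTransGen (crel A T) x y) :
    Relation.ReflTransGen (crel A T) y x :=
  by haveI : Std.Symm (crel A T) := ⟨fun _ _ hh => crel_symm T hh⟩; exact Std.Symm.symm _ _ h

lemma crel_mono {T T' : Set V} (h : T ⊆ T') {u v : V} (huv : crel A T u v) : crel A T' u v :=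
  ⟨h huv.1, h huv.2.1, huv.2.2⟩

lemma rtg_mono {T T' : Set V} (h : T ⊆ T') {u v : V}
    (huv : Relation.ReflTransGen (crel A T) u v) : Relation.ReflTransGen (crel A T') u v :=
  Relation.ReflTransGen.mono (fun _ _ hh => crel_mono h hh) _ _ huv

lemma mem_compOf_self {T : Set V} {a : V} (ha : a ∈ T) : a ∈ compOf A T a :=
  ⟨ha, Relation.ReflTransGen.refl⟩

lemma compOf_subset (T : Set V) (a : V) : compOf A T a ⊆ T := fun _ h => h.1

lemma compOf_eq_of_mem {T : Set V} {a x : V} (hx : x ∈ compOf A T x → True)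
    (h : x ∈ compOf A T a) : compOf A T x = compOf A T a := by
  ext y
  constructor
  · rintro ⟨hyT, hy⟩
    exact ⟨hyT, h.2.trans hy⟩
  · rintro ⟨hyT, hy⟩
    exact ⟨hyT, (rtg_symm h.2).trans hy⟩

lemma compOf_closed {T : Set V} {a x y : V} (hx : x ∈ compOf A T a) (hxy : crel A T x y) :
    y ∈ compOf A T a :=
  ⟨hxy.2.1, hx.2.tail hxy⟩

section Fin
variable [Fintype V]

lemma exists_sink (hacyc : ∀ v, ¬ Relation.TransGen A v v) (T : Set V) (hT : T.Nonempty) :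
    ∃ v ∈ T, ∀ u ∈ T, ¬ A v u := by
  haveI : IsTrans V (fun x y => Relation.TransGen A y x) :=
    ⟨fun _ _ _ h1 h2 => h2.trans h1⟩
  haveI : IsIrrefl V (fun x y => Relation.TransGen A y x) := ⟨fun a h => hacyc a h⟩
  obtain ⟨v, hv, hmin⟩ :=
    (Finite.wellFounded_of_trans_of_irrefl (fun x y => Relation.TransGen A y x)).has_min T hT
  exact ⟨v, hv, fun u hu hA => hmin u hu (Relation.TransGen.single hA)⟩

lemma exists_source (hacyc : ∀ v, ¬ Relation.TransGen A v v) (T : Set V) (hT : T.Nonempty) :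
    ∃ v ∈ T, ∀ u ∈ T, ¬ A u v := by
  haveI : IsTrans V (Relation.TransGen A) := ⟨fun _ _ _ h1 h2 => h1.trans h2⟩
  haveI : IsIrrefl V (Relation.TransGen A) := ⟨fun a h => hacyc a h⟩
  obtain ⟨v, hv, hmin⟩ :=
    (Finite.wellFounded_of_trans_of_irrefl (Relation.TransGen A)).has_min T hT
  exact ⟨v, hv, fun u hu hA => hmin u hu (Relation.TransGen.single hA)⟩

/-- every component of `S \ {v}`, for `v` a relative source or sink,
contains a relative source or sink of `S`. -/
lemma comp_has_ss (hacyc : ∀ v, ¬ Relation.TransGen A v v) {S : Set V} {v : V}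
    (hv : SS A S v) {a : V} (ha : a ∈ S \ {v}) :
    ∃ w ∈ compOf A (S \ {v}) a, SS A S w := by
  have hCne : (compOf A (S \ {v}) a).Nonempty := ⟨a, mem_compOf_self ha⟩
  rcases hv.2 with hsrc | hsnk
  · -- v is a source: find a sink of the component
    obtain ⟨w, hwC, hw⟩ := exists_sink hacyc _ hCne
    refine ⟨w, hwC, (compOf_subset _ _ hwC).1, Or.inr fun u hu hA => ?_⟩
    rcases eq_or_ne u v with rfl | hne
    · exact hsrc w (compOf_subset _ _ hwC).1 hA
    · exact hw u (compOf_closed hwC ⟨hwC.1, ⟨hu, hne⟩, Or.inl hA⟩) hA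
  · -- v is a sink: find a source of the component
    obtain ⟨w, hwC, hw⟩ := exists_source hacyc _ hCne
    refine ⟨w, hwC, (compOf_subset _ _ hwC).1, Or.inl fun u hu hA => ?_⟩
    rcases eq_or_ne u v with rfl | hne
    · exact hsnk w (compOf_subset _ _ hwC).1 hA
    · exact hw u (compOf_closed hwC ⟨hwC.1, ⟨hu, hne⟩, Or.inr hA⟩) hA

/-- From a vertex `u ≠ v` one can reach `v` staying inside
`compOf (S \ {v}) u ∪ {v}`. -/
lemma reach_v {S : Set V} (hS : ConnOn A S) {v : V} (hv : v ∈ S) :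
    ∀ u, u ∈ S → u ≠ v →
      Relation.ReflTransGen (crel A (compOf A (S \ {v}) u ∪ {v})) u v := by
  intro u hu hune
  have h : Relation.ReflTransGen (crel A S) u v := hS.2 u hu v hv
  induction h using Relation.ReflTransGen.head_induction_on with
  | refl => exact absurd rfl hune
  | head h' hrest ih =>
    rename_i x y
    rcases eq_or_ne y v with rfl | hyv
    · exact Relation.ReflTransGen.single
        ⟨Or.inl (mem_compOf_self ⟨hu, hune⟩), Or.inr rfl, h'.2.2⟩
    · have hxy : crel A (S \ {v}) x y := ⟨⟨hu, hune⟩, ⟨h'.2.1, hyv⟩, h'.2.2⟩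
      have hyC : y ∈ compOf A (S \ {v}) x := compOf_closed (mem_compOf_self ⟨hu, hune⟩) hxy
      have hcomp : compOf A (S \ {v}) y = compOf A (S \ {v}) x :=
        compOf_eq_of_mem (fun _ => trivial) hyC
      have ihy := ih h'.2.1 hyv
      rw [hcomp] at ihy
      exact ihy.head ⟨Or.inl (mem_compOf_self ⟨hu, hune⟩), Or.inl hyC, h'.2.2⟩

end Fin

end Stmt3Aux

namespace Stmt3Aux2
open Stmt3Aux
variable {A : V → V → Prop} [Fintype V]

/-- key lemma: every component of `S \ {v}` contains a source-or-sink `w`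
with `S \ {w}` connected. -/
lemma L2 (hacyc : ∀ v, ¬ Relation.TransGen A v v) :
    ∀ n : ℕ, ∀ S : Set V, ConnOn A S → ∀ v : V, SS A S v → ∀ a : V, a ∈ S \ {v} →
      (compOf A (S \ {v}) a).ncard ≤ n →
      ∃ w ∈ compOf A (S \ {v}) a, SS A S w ∧ ConnOn A (S \ {w}) := by
  intro n
  induction n with
  | zero =>
    intro S _ v _ a ha hcard
    have : a ∈ compOf A (S \ {v}) a := mem_compOf_self ha
    have hpos : 0 < (compOf A (S \ {v}) a).ncard :=
      (Set.ncard_pos (Set.toFinite _)).mpr ⟨a, this⟩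
    omega
  | succ n IH =>
    intro S hS v hv a ha hcard
    set C := compOf A (S \ {v}) a with hC
    obtain ⟨w, hwC, hwss⟩ := comp_has_ss hacyc hv ha
    by_cases hconn : ConnOn A (S \ {w})
    · exact ⟨w, hwC, hwss, hconn⟩
    · have hwv : w ≠ v := (compOf_subset _ _ hwC).2
      have hvSw : v ∈ S \ {w} := ⟨hv.1, fun h => hwv h.symm⟩
      have hne : (S \ {w}).Nonempty := ⟨v, hvSw⟩
      have hnpre : ¬ ∀ p ∈ S \ {w}, ∀ q ∈ S \ {w},
          Relation.ReflTransGen (crel A (S \ {w})) p q := fun h => hconn ⟨hne, h⟩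
      push_neg at hnpre
      obtain ⟨p, hp, q, hq, hpq⟩ := hnpre
      -- one of the components of p, q misses v
      have hvnot : v ∉ compOf A (S \ {w}) p ∨ v ∉ compOf A (S \ {w}) q := by
        by_contra h
        push_neg at h
        exact hpq (h.1.2.trans (rtg_symm h.2.2))
      obtain ⟨c, hc, hvc⟩ : ∃ c, c ∈ S \ {w} ∧ v ∉ compOf A (S \ {w}) c := by
        rcases hvnot with h | h
        · exact ⟨p, hp, h⟩
        · exact ⟨q, hq, h⟩
      -- the component of c is a strict subset of C missing w
      have hsub : compOf A (S \ {w}) c ⊆ C \ {w} := by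
        intro x hx
        have hxS : x ∈ S \ {w} := compOf_subset _ _ hx
        have hxv : x ≠ v := fun h => hvc (h ▸ hx)
        refine ⟨?_, hxS.2⟩
        by_contra hxC
        -- w is not in the (S\{v})-component of x
        have hwnot : w ∉ compOf A (S \ {v}) x := by
          intro hw
          have h1 : compOf A (S \ {v}) w = compOf A (S \ {v}) x :=
            compOf_eq_of_mem (fun _ => trivial) hw
          have h2 : compOf A (S \ {v}) w = C :=
            compOf_eq_of_mem (fun _ => trivial) hwC
          have : x ∈ compOf A (S \ {v}) x := mem_compOf_self ⟨hxS.1, hxv⟩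
          rw [← h1, h2] at this
          exact hxC this
        have hsub2 : compOf A (S \ {v}) x ∪ {v} ⊆ S \ {w} := by
          rintro y (hy | hy)
          · exact ⟨(compOf_subset _ _ hy).1, fun h => hwnot (h ▸ hy)⟩
          · rcases hy with rfl
            exact hvSw
        have hreach := reach_v hS hv.1 x hxS.1 hxv
        have : Relation.ReflTransGen (crel A (S \ {w})) x v := rtg_mono hsub2 hreach
        have hxc : compOf A (S \ {w}) x = compOf A (S \ {w}) c :=
          compOf_eq_of_mem (fun _ => trivial) hx
        have hvmem : v ∈ compOf A (S \ {w}) c := by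
          rw [← hxc]; exact ⟨hvSw, this⟩
        exact hvc hvmem
      have hcard' : (compOf A (S \ {w}) c).ncard ≤ n := by
        have h1 : (compOf A (S \ {w}) c).ncard ≤ (C \ {w}).ncard :=
          Set.ncard_le_ncard hsub (Set.toFinite _)
        have h2 : (C \ {w}).ncard + 1 = C.ncard :=
          Set.ncard_diff_singleton_add_one hwC (Set.toFinite _)
        omega
      obtain ⟨w', hw'C, hw'⟩ := IH S hS w hwss c hc hcard'
      exact ⟨w', (hsub hw'C).1, hw'⟩

/-- not-connected extraction -/
lemma not_conn {S : Set V} (hne : S.Nonempty) (h : ¬ ConnOn A S) :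
    ∃ p ∈ S, ∃ q ∈ S, ¬ Relation.ReflTransGen (crel A S) p q := by
  have : ¬ ∀ p ∈ S, ∀ q ∈ S, Relation.ReflTransGen (crel A S) p q := fun hh => h ⟨hne, hh⟩
  push_neg at this
  exact this

lemma pick_comp_missing {T : Set V} {p q v : V} (hp : p ∈ T) (hq : q ∈ T)
    (hpq : ¬ Relation.ReflTransGen (crel A T) p q) :
    ∃ c ∈ T, v ∉ compOf A T c := by
  by_cases h : v ∈ compOf A T p
  · refine ⟨q, hq, fun h' => hpq (h.2.trans (rtg_symm h'.2))⟩
  · exact ⟨p, hp, h⟩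

/-- main structural lemma: a connected set with at least 2 elements has two
distinct source-or-sink vertices whose removal keeps it connected. -/
lemma two_ss (hacyc : ∀ v, ¬ Relation.TransGen A v v) {S : Set V}
    (hS : ConnOn A S) (h2 : 2 ≤ S.ncard) :
    ∃ w₁ w₂ : V, w₁ ≠ w₂ ∧ SS A S w₁ ∧ SS A S w₂ ∧
      ConnOn A (S \ {w₁}) ∧ ConnOn A (S \ {w₂}) := by
  obtain ⟨v, hvS, hvsink⟩ := exists_sink hacyc S hS.1
  have hvss : SS A S v := ⟨hvS, Or.inr hvsink⟩
  -- some u ≠ v in S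
  obtain ⟨u, huS, hune⟩ : ∃ u ∈ S, u ≠ v := by
    obtain ⟨a, ha, b, hb, hab⟩ := (Set.one_lt_ncard (Set.toFinite S)).mp (by omega)
    rcases eq_or_ne a v with rfl | h
    · exact ⟨b, hb, fun hh => hab hh.symm⟩
    · exact ⟨a, ha, h⟩
  by_cases hconn : ConnOn A (S \ {v})
  · -- v works; find a second one: a source
    obtain ⟨s, hsS, hssrc⟩ := exists_source hacyc S hS.1
    have hsss : SS A S s := ⟨hsS, Or.inl hssrc⟩
    have hsv : s ≠ v := by
      rintro rfl
      have h := hS.2 s hsS u huS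
      rcases (Relation.ReflTransGen.cases_head h) with rfl | ⟨y, hy, _⟩
      · exact hune rfl
      · rcases hy.2.2 with h' | h'
        · exact hvsink y hy.2.1 h'
        · exact hssrc y hy.2.1 h'
    by_cases hconn2 : ConnOn A (S \ {s})
    · exact ⟨v, s, fun h => hsv h.symm, hvss, hsss, hconn, hconn2⟩
    · have hvSs : v ∈ S \ {s} := ⟨hvS, fun h => hsv h.symm⟩
      obtain ⟨p, hp, q, hq, hpq⟩ := not_conn ⟨v, hvSs⟩ hconn2
      obtain ⟨c, hc, hvc⟩ := pick_comp_missing (v := v) hp hq hpq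
      obtain ⟨w, hwC, hwss, hwconn⟩ :=
        L2 hacyc (compOf A (S \ {s}) c).ncard S hS s hsss c hc le_rfl
      exact ⟨v, w, fun h => hvc (h ▸ hwC), hvss, hwss, hconn, hwconn⟩
  · obtain ⟨p, hp, q, hq, hpq⟩ := not_conn (A := A) ⟨u, Set.mem_diff_singleton.mpr ⟨huS, hune⟩⟩ hconn
    obtain ⟨w₁, hw1C, hw1ss, hw1conn⟩ :=
      L2 hacyc (compOf A (S \ {v}) p).ncard S hS v hvss p hp le_rfl
    obtain ⟨w₂, hw2C, hw2ss, hw2conn⟩ :=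
      L2 hacyc (compOf A (S \ {v}) q).ncard S hS v hvss q hq le_rfl
    refine ⟨w₁, w₂, ?_, hw1ss, hw2ss, hw1conn, hw2conn⟩
    rintro rfl
    exact hpq (hw1C.2.trans (rtg_symm hw2C.2))

/-- splitting a chain at an internal vertex -/
lemma chain_split :
    ∀ (l : List V) (a b w : V), List.Chain A a (l ++ [b]) → w ∈ l →
      ∃ p ∈ a :: l, A p w ∧ ∃ q ∈ l ++ [b], A w q := by
  intro l
  induction l with
  | nil => intro a b w _ hw; exact absurd hw List.not_mem_nil
  | cons x t ih =>
    intro a b w hch hw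
    rw [List.cons_append] at hch
    replace hch : A a x ∧ List.Chain A x (t ++ [b]) := List.isChain_cons_cons.mp hch
    rcases List.mem_cons.mp hw with rfl | hwt
    · refine ⟨a, List.mem_cons_self, hch.1, ?_⟩
      cases t with
      | nil =>
        rw [List.nil_append] at hch; replace hch := And.intro hch.1 (List.isChain_cons_cons.mp hch.2)
        exact ⟨b, by simp, hch.2.1⟩
      | cons y t' =>
        rw [List.cons_append] at hch; replace hch := And.intro hch.1 (List.isChain_cons_cons.mp hch.2)
        exact ⟨y, by simp, hch.2.1⟩
    · obtain ⟨p, hp, hpw, q, hq, hwq⟩ := ih x b w hch.2 hwt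
      refine ⟨p, ?_, hpw, q, ?_, hwq⟩
      · rcases List.mem_cons.mp hp with rfl | h
        · simp
        · simp [h]
      · rw [List.cons_append]; exact List.mem_cons_of_mem _ hq

lemma convexOn_self (S : Set V) : ConvexOn' A S S :=
  fun _ _ l _ _ hl _ _ w hw => hl w hw

lemma convex_mono {S X : Set V} {w : V} (hw : SS A S w) (hX : X ⊆ S \ {w})
    (hconv : ConvexOn' A (S \ {w}) X) : ConvexOn' A S X := by
  intro a b l ha hb hl hch hnd
  have hwl : w ∉ l := by
    intro hwl
    obtain ⟨p, hp, hpw, q, hq, hwq⟩ := chain_split l a b w hch hwl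
    have hpS : p ∈ S := by
      rcases List.mem_cons.mp hp with rfl | h
      · exact (hX ha).1
      · exact hl p h
    have hqS : q ∈ S := by
      rcases List.mem_append.mp hq with h | h
      · exact hl q h
      · rw [List.mem_singleton] at h; exact h ▸ (hX hb).1
    rcases hw.2 with h | h
    · exact h p hpS hpw
    · exact h q hqS hwq
  have hl' : ∀ x ∈ l, x ∈ S \ {w} := fun x hx => ⟨hl x hx, fun h => hwl (h ▸ hx)⟩
  exact hconv a b l ha hb hl' hch hnd

/-- existence of a connected convex `k`-set through any given vertex -/
lemma Qlem (hacyc : ∀ v, ¬ Relation.TransGen A v v) :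
    ∀ n : ℕ, ∀ S : Set V, S.ncard ≤ n → ConnOn A S → ∀ k : ℕ, 1 ≤ k → k ≤ S.ncard →
      ∀ z ∈ S, ∃ X : Set V, X ⊆ S ∧ z ∈ X ∧ ConnOn A X ∧ ConvexOn' A S X ∧ X.ncard = k := by
  intro n
  induction n with
  | zero => intro S hSn _ k hk1 hkS _ _; omega
  | succ n IH =>
    intro S hSn hS k hk1 hkS z hz
    rcases eq_or_lt_of_le hkS with heq | hlt
    · exact ⟨S, subset_rfl, hz, hS, convexOn_self S, heq.symm⟩
    · have h2 : 2 ≤ S.ncard := by omega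
      obtain ⟨w₁, w₂, hne, hss1, hss2, hc1, hc2⟩ := two_ss hacyc hS h2
      obtain ⟨w, hwss, hwconn, hwz⟩ :
          ∃ w, SS A S w ∧ ConnOn A (S \ {w}) ∧ w ≠ z := by
        rcases eq_or_ne w₁ z with rfl | h
        · exact ⟨w₂, hss2, hc2, fun h => hne h.symm⟩
        · exact ⟨w₁, hss1, hc1, h⟩
      have hcard : (S \ {w}).ncard + 1 = S.ncard :=
        Set.ncard_diff_singleton_add_one hwss.1 (Set.toFinite _)
      obtain ⟨X, hXsub, hzX, hXconn, hXconv, hXcard⟩ :=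
        IH (S \ {w}) (by omega) hwconn k hk1 (by omega) z ⟨hz, fun h => hwz h.symm⟩
      exact ⟨X, hXsub.trans Set.diff_subset, hzX, hXconn,
        convex_mono hwss hXsub hXconv, hXcard⟩

/-- counting lemma -/
lemma Plem (hacyc : ∀ v, ¬ Relation.TransGen A v v) :
    ∀ n : ℕ, ∀ S : Set V, S.ncard ≤ n → ConnOn A S → ∀ k : ℕ, 1 ≤ k → k ≤ S.ncard →
      S.ncard - k + 1 ≤
        {X : Set V | X ⊆ S ∧ ConnOn A X ∧ ConvexOn' A S X ∧ X.ncard = k}.ncard := by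
  intro n
  induction n with
  | zero => intro S hSn _ k hk1 hkS; omega
  | succ n IH =>
    intro S hSn hS k hk1 hkS
    set F := {X : Set V | X ⊆ S ∧ ConnOn A X ∧ ConvexOn' A S X ∧ X.ncard = k} with hF
    rcases eq_or_lt_of_le hkS with heq | hlt
    · have hSF : S ∈ F := ⟨subset_rfl, hS, convexOn_self S, heq.symm⟩
      have : 0 < F.ncard := (Set.ncard_pos (Set.toFinite _)).mpr ⟨S, hSF⟩
      omega
    · have h2 : 2 ≤ S.ncard := by omega
      obtain ⟨w, _, hne, hwss, _, hwconn, _⟩ := two_ss hacyc hS h2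
      have hcard : (S \ {w}).ncard + 1 = S.ncard :=
        Set.ncard_diff_singleton_add_one hwss.1 (Set.toFinite _)
      set F' := {X : Set V | X ⊆ S \ {w} ∧ ConnOn A X ∧ ConvexOn' A (S \ {w}) X ∧ X.ncard = k}
        with hF'
      have hIH : (S \ {w}).ncard - k + 1 ≤ F'.ncard :=
        IH (S \ {w}) (by omega) hwconn k hk1 (by omega)
      have hsub : F' ⊆ F := by
        rintro X ⟨hXsub, hXconn, hXconv, hXcard⟩
        exact ⟨hXsub.trans Set.diff_subset, hXconn, convex_mono hwss hXsub hXconv, hXcard⟩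
      obtain ⟨X₀, hX₀sub, hwX₀, hX₀conn, hX₀conv, hX₀card⟩ :=
        Qlem hacyc S.ncard S le_rfl hS k hk1 hkS w hwss.1
      have hX₀F : X₀ ∈ F := ⟨hX₀sub, hX₀conn, hX₀conv, hX₀card⟩
      have hX₀F' : X₀ ∉ F' := by
        rintro ⟨hsub', _⟩
        exact (hsub' hwX₀).2 rfl
      have hins : insert X₀ F' ⊆ F := by
        rintro X (rfl | hX)
        · exact hX₀F
        · exact hsub hX
      have h1 : (insert X₀ F').ncard = F'.ncard + 1 :=
        Set.ncard_insert_of_notMem hX₀F' (Set.toFinite _)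
      have h2' : (insert X₀ F').ncard ≤ F.ncard :=
        Set.ncard_le_ncard hins (Set.toFinite _)
      omega

/-- bridge: `ConnOn` implies connectivity of the induced graph -/
lemma connOn_to_connected {X : Set V} (h : ConnOn A X) :
    ((SimpleGraph.fromRel A).induce X).Connected := by
  rw [SimpleGraph.connected_iff]
  obtain ⟨⟨x, hx⟩, hall⟩ := h
  refine ⟨?_, ⟨⟨x, hx⟩⟩⟩
  rintro ⟨a, ha⟩ ⟨b, hb⟩
  have key : ∀ c, Relation.ReflTransGen (crel A X) a c → ∀ hc : c ∈ X,
      ((SimpleGraph.fromRel A).induce X).Reachable ⟨a, ha⟩ ⟨c, hc⟩ := by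
    intro c hrt
    induction hrt with
    | refl => intro hc; exact SimpleGraph.Reachable.refl _
    | tail hab hstep ih =>
      rename_i b' c'
      intro hc
      obtain ⟨hb'X, hc'X, harc⟩ := hstep
      rcases eq_or_ne b' c' with rfl | hbc
      · exact ih hb'X
      · refine (ih hb'X).trans (SimpleGraph.Adj.reachable ?_)
        show ((SimpleGraph.fromRel A).comap _).Adj _ _
        simp only [SimpleGraph.comap_adj, Function.Embedding.coe_subtype,
          SimpleGraph.fromRel_adj]
        exact ⟨hbc, harc⟩
  exact key b (hall a ha b hb) hb

/-- bridge: digraph connectivity gives `ConnOn` on `univ` -/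
lemma digraphConnected_to_connOn (h : (SimpleGraph.fromRel A).Connected) :
    ConnOn A (Set.univ : Set V) := by
  haveI : Nonempty V := h.nonempty
  refine ⟨⟨Classical.arbitrary V, trivial⟩, fun a _ b _ => ?_⟩
  have := (SimpleGraph.reachable_iff_reflTransGen (G := SimpleGraph.fromRel A) a b).mp (h.preconnected a b)
  refine Relation.ReflTransGen.mono ?_ _ _ this
  intro x y hxy
  rw [SimpleGraph.fromRel_adj] at hxy
  exact ⟨trivial, trivial, hxy.2⟩

end Stmt3Aux2


/-- A connected acyclic digraph of order `n` has at least `n - k + 1` connected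
convex sets of size `k`, for every `1 ≤ k ≤ n`. -/
theorem stmt_3 {V : Type*} [Fintype V] (A : V → V → Prop)
    (hconn : DigraphConnected A) (hacyc : AcyclicDigraph A)
    (k : ℕ) (hk1 : 1 ≤ k) (hkn : k ≤ Fintype.card V) :
    Fintype.card V - k + 1 ≤
      {X : Set V | ConnectedIn A X ∧ ConvexIn A X ∧ X.ncard = k}.ncard := by
  have huniv : (Set.univ : Set V).ncard = Fintype.card V := by
    rw [Set.ncard_univ, Nat.card_eq_fintype_card]
  have hS : Stmt3Aux.ConnOn A (Set.univ : Set V) :=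
    Stmt3Aux2.digraphConnected_to_connOn hconn
  have hP := Stmt3Aux2.Plem hacyc (Set.univ : Set V).ncard (Set.univ : Set V) le_rfl hS k hk1
    (by rw [huniv]; exact hkn)
  rw [huniv] at hP
  refine le_trans hP (Set.ncard_le_ncard ?_ (Set.toFinite _))
  rintro X ⟨_, hXconn, hXconv, hXcard⟩
  refine ⟨Stmt3Aux2.connOn_to_connected hXconn, ⟨hXconn.1, ?_⟩, hXcard⟩
  intro a b l ha hb hch hnd
  exact hXconv a b l ha hb (fun _ _ => trivial) hch hnd
end

section
/- Every connected acyclic digraph of order n has at least n(n+1)/2 connected convex sets. -/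
/-!
Digraphs are given by an arc relation `A : V → V → Prop` on a vertex type `V`.
A directed path from `a` to `b` is encoded as `a :: (l ++ [b])` where the list
satisfies `List.Chain A` (consecutive arcs) and `List.Nodup` (distinct vertices);
`l` is the list of internal vertices.
-/

variable {V : Type*}

namespace CCAux

/-- restricted arc relation -/
def Rr (A : V → V → Prop) (X : Set V) (u v : V) : Prop := u ∈ X ∧ v ∈ X ∧ A u v

/-- restricted symmetrized relation -/
def Ee (A : V → V → Prop) (X : Set V) (u v : V) : Prop := Rr A X u v ∨ Rr A X v u

/-- reachability within X in the underlying undirected graph -/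
def Reach (A : V → V → Prop) (X : Set V) : V → V → Prop := Relation.ReflTransGen (Ee A X)

def Conn (A : V → V → Prop) (X : Set V) : Prop :=
  X.Nonempty ∧ ∀ a ∈ X, ∀ b ∈ X, Reach A X a b

def Cvx (A : V → V → Prop) (X Y : Set V) : Prop :=
  ∀ a b : V, ∀ l : List V, a ∈ Y → b ∈ Y → List.Chain (Rr A X) a (l ++ [b]) →
    (a :: (l ++ [b])).Nodup → ∀ w ∈ l, w ∈ Y

def CCX (A : V → V → Prop) (X Y : Set V) : Prop := Y ⊆ X ∧ Conn A Y ∧ Cvx A X Y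

def SOS (A : V → V → Prop) (X : Set V) (z : V) : Prop :=
  (∀ u ∈ X, ¬ A u z) ∨ (∀ u ∈ X, ¬ A z u)

def GoodV (A : V → V → Prop) (X : Set V) (z : V) : Prop :=
  z ∈ X ∧ SOS A X z ∧ Conn A (X \ {z})

variable {A : V → V → Prop}

lemma Ee.symm' {X : Set V} {u v : V} (h : Ee A X u v) : Ee A X v u := h.symm

lemma reach_symm {X : Set V} {u v : V} (h : Reach A X u v) : Reach A X v u :=
  by haveI : Std.Symm (Ee A X) := ⟨fun _ _ h => h.symm⟩; exact (Relation.ReflTransGen.symmetric (r := Ee A X)).symm _ _ h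

lemma reach_mono {X X' : Set V} (hXX : X ⊆ X') {u v : V} (h : Reach A X u v) :
    Reach A X' u v := by
  refine Relation.ReflTransGen.mono ?_ _ _ h
  rintro a b (⟨ha, hb, hab⟩ | ⟨ha, hb, hab⟩)
  · exact Or.inl ⟨hXX ha, hXX hb, hab⟩
  · exact Or.inr ⟨hXX ha, hXX hb, hab⟩

lemma reach_head {X : Set V} {a b : V} (h : Reach A X a b) (hne : a ≠ b) :
    ∃ w, Ee A X a w := by
  rcases Relation.ReflTransGen.cases_head h with rfl | ⟨c, hc, _⟩
  · exact absurd rfl hne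
  · exact ⟨c, hc⟩

/-- every element of the tail of a chain is a target -/
lemma chain_targets {X : Set V} {a : V} {l : List V}
    (h : List.Chain (Rr A X) a l) : ∀ w ∈ l, w ∈ X := by
  induction l generalizing a with
  | nil => simp
  | cons x t ih =>
    unfold List.Chain at h; rw [List.chain_cons] at h
    intro w hw
    rcases List.mem_cons.mp hw with rfl | hw
    · exact h.1.2.1
    · exact ih h.2 w hw

lemma internal_in_out {X : Set V} {a b : V} {l : List V}
    (h : List.Chain (Rr A X) a (l ++ [b])) :
    ∀ w ∈ l, (∃ u, Rr A X u w) ∧ (∃ u, Rr A X w u) := by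
  induction l generalizing a with
  | nil => simp
  | cons x t ih =>
    rw [List.cons_append] at h; unfold List.Chain at h; rw [List.chain_cons] at h
    obtain ⟨hax, hch⟩ := h
    intro w hw
    rcases List.mem_cons.mp hw with rfl | hw
    · refine ⟨⟨a, hax⟩, ?_⟩
      cases t with
      | nil =>
        rw [List.nil_append, List.chain_cons] at hch
        exact ⟨b, hch.1⟩
      | cons y t' =>
        rw [List.cons_append, List.chain_cons] at hch
        exact ⟨y, hch.1⟩
    · exact ih hch w hw

lemma chain_restrict {X X' : Set V} {a : V} {l : List V}
    (h : List.Chain (Rr A X) a l) (hmem : ∀ w ∈ a :: l, w ∈ X') :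
    List.Chain (Rr A X') a l := by
  induction l generalizing a with
  | nil => exact List.Chain.nil
  | cons x t ih =>
    unfold List.Chain at h ⊢; rw [List.chain_cons] at h ⊢
    refine ⟨⟨hmem a (by simp), hmem x (by simp), h.1.2.2⟩, ih h.2 ?_⟩
    intro w hw
    rcases List.mem_cons.mp hw with rfl | hw
    · exact hmem w (by simp)
    · exact hmem w (by simp [hw])

lemma cvx_lift {X Y : Set V} {z : V} (hz : SOS A X z) (hY : Y ⊆ X \ {z})
    (hcvx : Cvx A (X \ {z}) Y) : Cvx A X Y := by
  intro a b l ha hb hch hnd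
  have hmem : ∀ w ∈ a :: (l ++ [b]), w ∈ X \ {z} := by
    intro w hw
    rcases List.mem_cons.mp hw with rfl | hw
    · exact hY ha
    rcases List.mem_append.mp hw with hw | hw
    · -- internal vertex
      obtain ⟨⟨u, hu⟩, ⟨u', hu'⟩⟩ := internal_in_out hch w hw
      refine ⟨hu.2.1, ?_⟩
      intro hwz
      rw [Set.mem_singleton_iff] at hwz
      subst hwz
      rcases hz with hsrc | hsnk
      · exact hsrc u hu.1 hu.2.2
      · exact hsnk u' hu'.2.1 hu'.2.2
    · rw [List.mem_singleton] at hw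
      subst hw
      exact hY hb
  exact hcvx a b l ha hb (chain_restrict hch hmem) hnd

lemma conn_singleton (z : V) : Conn A {z} := by
  refine ⟨⟨z, rfl⟩, ?_⟩
  rintro a ha b hb
  rw [Set.mem_singleton_iff] at ha hb
  subst ha; subst hb
  exact Relation.ReflTransGen.refl

lemma cvx_singleton (z : V) (X : Set V) : Cvx A X {z} := by
  intro a b l ha hb hch hnd w hw
  exfalso
  rw [Set.mem_singleton_iff] at ha hb
  have hab : a = b := by rw [ha, hb]
  have hmem : a ∈ l ++ [b] := by rw [hab]; simp
  exact (List.nodup_cons.mp hnd).1 hmem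

lemma cvx_self (X : Set V) : Cvx A X X := by
  intro a b l ha hb hch hnd w hw
  exact chain_targets hch w (by simp [hw])

lemma exists_source (hacyc : AcyclicDigraph A) {X : Set V} (hfin : X.Finite)
    (hne : X.Nonempty) : ∃ z ∈ X, ∀ u ∈ X, ¬ A u z := by
  haveI : IsTrans V (Relation.TransGen A) := ⟨fun _ _ _ => Relation.TransGen.trans⟩
  haveI : IsIrrefl V (Relation.TransGen A) := ⟨hacyc⟩
  haveI : IsStrictOrder V (Relation.TransGen A) := {}
  have hwf : X.WellFoundedOn (Relation.TransGen A) := hfin.wellFoundedOn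
  obtain ⟨x, hx⟩ := hne
  obtain ⟨⟨z, hz⟩, _, hmin⟩ := hwf.has_min Set.univ ⟨⟨x, hx⟩, trivial⟩
  refine ⟨z, hz, ?_⟩
  intro u hu hA
  exact hmin ⟨u, hu⟩ trivial (Relation.TransGen.single hA)

lemma exists_sink (hacyc : AcyclicDigraph A) {X : Set V} (hfin : X.Finite)
    (hne : X.Nonempty) : ∃ z ∈ X, ∀ u ∈ X, ¬ A z u := by
  have hacyc' : AcyclicDigraph (Function.swap A) := by
    intro v hv
    exact hacyc v (Relation.transGen_swap.mp hv)
  obtain ⟨z, hz, h⟩ := exists_source hacyc' hfin hne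
  exact ⟨z, hz, h⟩

/-- a vertex of a component reaches `c` within its component together with `c` -/
lemma comp_reach_c {X : Set V} (hX : Conn A X) {c : V} (hc : c ∈ X) {u0 : V}
    (hu0 : u0 ∈ X \ {c}) :
    Reach A ({x ∈ X \ {c} | Reach A (X \ {c}) u0 x} ∪ {c}) u0 c := by
  set S := X \ {c} with hS
  set C := {x ∈ S | Reach A S u0 x} with hC
  have hr : Reach A X u0 c := hX.2 u0 hu0.1 c hc
  have main : ∀ v, Reach A X v c → v ∈ C → Reach A (C ∪ {c}) v c := by
    intro v hv
    induction hv using Relation.ReflTransGen.head_induction_on with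
    | refl => intro _; exact Relation.ReflTransGen.refl
    | head e r ih =>
      rename_i x y
      intro hx
      by_cases hyc : y = c
      · subst hyc
        refine Relation.ReflTransGen.single ?_
        rcases e with ⟨h1, h2, h3⟩ | ⟨h1, h2, h3⟩
        · exact Or.inl ⟨Or.inl hx, Or.inr rfl, h3⟩
        · exact Or.inr ⟨Or.inr rfl, Or.inl hx, h3⟩
      · have hyX : y ∈ X := by
          rcases e with ⟨h1, h2, h3⟩ | ⟨h1, h2, h3⟩
          · exact h2
          · exact h1
        have hyS : y ∈ S := ⟨hyX, hyc⟩
        have hxS : x ∈ S := hx.1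
        have heS : Ee A S x y := by
          rcases e with ⟨h1, h2, h3⟩ | ⟨h1, h2, h3⟩
          · exact Or.inl ⟨hxS, hyS, h3⟩
          · exact Or.inr ⟨hyS, hxS, h3⟩
        have hyC : y ∈ C := ⟨hyS, hx.2.trans (Relation.ReflTransGen.single heS)⟩
        have heC : Ee A (C ∪ {c}) x y := by
          rcases e with ⟨h1, h2, h3⟩ | ⟨h1, h2, h3⟩
          · exact Or.inl ⟨Or.inl hx, Or.inl hyC, h3⟩
          · exact Or.inr ⟨Or.inl hyC, Or.inl hx, h3⟩
        exact Relation.ReflTransGen.head heC (ih hyC)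
  exact main u0 hr ⟨hu0, Relation.ReflTransGen.refl⟩

lemma comp_closed {S : Set V} {u0 u w : V}
    (hu : u ∈ {x ∈ S | Reach A S u0 x}) (hw : w ∈ S) (he : Ee A S u w) :
    w ∈ {x ∈ S | Reach A S u0 x} :=
  ⟨hw, hu.2.trans (Relation.ReflTransGen.single he)⟩

end CCAux

namespace CCAux2
open CCAux

variable {A : V → V → Prop}

lemma good_two [Fintype V] (hacyc : AcyclicDigraph A) :
    ∀ n (X : Set V), X.ncard = n → 2 ≤ X.ncard → Conn A X →
      ∃ z1 z2, z1 ≠ z2 ∧ GoodV A X z1 ∧ GoodV A X z2 := by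
  intro n
  induction n using Nat.strong_induction_on with
  | _ n ih =>
    intro X hn h2 hconn
    by_cases hcut : ∀ c ∈ X, Conn A (X \ {c})
    · obtain ⟨s, hs, hsrc⟩ := exists_source hacyc X.toFinite hconn.1
      obtain ⟨t, ht, hsnk⟩ := exists_sink hacyc X.toFinite hconn.1
      have hst : s ≠ t := by
        rintro rfl
        obtain ⟨b, hb, hbs⟩ := Set.exists_ne_of_one_lt_ncard (s := X) (by omega) s
        obtain ⟨w, hw⟩ := reach_head (hconn.2 s hs b hb) (Ne.symm hbs)
        rcases hw with ⟨h1, h2', h3⟩ | ⟨h1, h2', h3⟩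
        · exact hsnk w h2' h3
        · exact hsrc w h1 h3
      exact ⟨s, t, hst, ⟨hs, Or.inl hsrc, hcut s hs⟩, ⟨ht, Or.inr hsnk, hcut t ht⟩⟩
    · push_neg at hcut
      obtain ⟨c, hc, hnc⟩ := hcut
      have hSne : (X \ {c}).Nonempty := by
        obtain ⟨b, hb, hbc⟩ := Set.exists_ne_of_one_lt_ncard (s := X) (by omega) c
        exact ⟨b, hb, hbc⟩
      have hex : ∃ a ∈ X \ {c}, ∃ b ∈ X \ {c}, ¬ Reach A (X \ {c}) a b := by
        by_contra h
        push_neg at h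
        exact hnc ⟨hSne, h⟩
      obtain ⟨a0, ha0, b0, hb0, hab0⟩ := hex
      have key : ∀ a' ∈ X \ {c}, ∀ b' ∈ X \ {c}, ¬ Reach A (X \ {c}) a' b' →
          ∃ z, GoodV A X z ∧ z ∈ X \ {c} ∧ Reach A (X \ {c}) a' z := by
        intro a' ha' b' hb' hab
        set S := X \ {c} with hSdef
        set Ca := {x ∈ S | Reach A S a' x} with hCadef
        set Xa := Ca ∪ {c} with hXadef
        have haCa : a' ∈ Ca := ⟨ha', Relation.ReflTransGen.refl⟩
        have hbCa : b' ∉ Ca := fun h => hab h.2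
        have hCaS : Ca ⊆ S := fun x hx => hx.1
        have hXaX : Xa ⊆ X := by
          rintro x (hx | hx)
          · exact (hCaS hx).1
          · rw [Set.mem_singleton_iff] at hx; subst hx; exact hc
        have hacne : a' ≠ c := ha'.2
        have h2a : 2 ≤ Xa.ncard := by
          have hpair : ({a', c} : Set V) ⊆ Xa := by
            rintro x (rfl | hx)
            · exact Or.inl haCa
            · exact Or.inr hx
          calc 2 = ({a', c} : Set V).ncard := (Set.ncard_pair hacne).symm
            _ ≤ Xa.ncard := Set.ncard_le_ncard hpair (Set.toFinite _)
        have hlt : Xa.ncard < X.ncard := by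
          apply Set.ncard_lt_ncard _ (Set.toFinite _)
          refine (Set.ssubset_iff_of_subset hXaX).mpr ⟨b', hb'.1, ?_⟩
          rintro (h | h)
          · exact hbCa h
          · exact hb'.2 h
        have star : ∀ w ∈ Ca, Reach A Xa w c := by
          intro w hw
          have h1 := comp_reach_c hconn hc (hw.1 : w ∈ X \ {c})
          refine reach_mono ?_ h1
          rintro x (hx | hx)
          · exact Or.inl ⟨hx.1, hw.2.trans hx.2⟩
          · exact Or.inr hx
        have hconnXa : Conn A Xa := by
          refine ⟨⟨c, Or.inr rfl⟩, ?_⟩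
          have hrc : ∀ u ∈ Xa, Reach A Xa u c := by
            rintro u (hu | hu)
            · exact star u hu
            · rw [Set.mem_singleton_iff] at hu; subst hu; exact Relation.ReflTransGen.refl
          intro u hu v hv
          exact (hrc u hu).trans (reach_symm (hrc v hv))
        obtain ⟨y1, y2, hy12, hg1, hg2⟩ := ih Xa.ncard (hn ▸ hlt) Xa rfl h2a hconnXa
        obtain ⟨z, hgz, hzc⟩ : ∃ z, GoodV A Xa z ∧ z ≠ c := by
          by_cases h : y1 = c
          · exact ⟨y2, hg2, by rw [← h]; exact hy12.symm⟩
          · exact ⟨y1, hg1, h⟩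
        have hzCa : z ∈ Ca := by
          rcases hgz.1 with h | h
          · exact h
          · exact absurd h hzc
        have hzS : z ∈ S := hCaS hzCa
        have hnb : ∀ u ∈ X, (A u z ∨ A z u) → u ∈ Xa := by
          intro u hu harc
          by_cases huc : u = c
          · subst huc; exact Or.inr rfl
          · have huS : u ∈ S := ⟨hu, huc⟩
            have he : Ee A S z u := by
              rcases harc with h | h
              · exact Or.inr ⟨huS, hzS, h⟩
              · exact Or.inl ⟨hzS, huS, h⟩
            exact Or.inl (comp_closed hzCa huS he)
        have hsos : SOS A X z := by
          rcases hgz.2.1 with hsrc | hsnk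
          · left; intro u hu hA; exact hsrc u (hnb u hu (Or.inl hA)) hA
          · right; intro u hu hA; exact hsnk u (hnb u hu (Or.inr hA)) hA
        have hczne : c ≠ z := Ne.symm hzc
        have hcT : c ∈ X \ {z} := ⟨hc, hczne⟩
        have hrT : ∀ w ∈ X \ {z}, Reach A (X \ {z}) w c := by
          rintro w ⟨hwX, hwz⟩
          by_cases hwc : w = c
          · subst hwc; exact Relation.ReflTransGen.refl
          · have hwS : w ∈ S := ⟨hwX, hwc⟩
            by_cases hwCa : w ∈ Ca
            · have h1 := hgz.2.2.2 w ⟨Or.inl hwCa, hwz⟩ c ⟨Or.inr rfl, hczne⟩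
              refine reach_mono ?_ h1
              rintro x ⟨hx, hxz⟩
              exact ⟨hXaX hx, hxz⟩
            · have h1 := comp_reach_c hconn hc hwS
              refine reach_mono ?_ h1
              rintro x (hx | hx)
              · refine ⟨hx.1.1, ?_⟩
                intro hxz
                rw [Set.mem_singleton_iff] at hxz
                subst hxz
                exact hwCa ⟨hwS, hzCa.2.trans (reach_symm hx.2)⟩
              · rw [Set.mem_singleton_iff] at hx; subst hx; exact hcT
        have hconnT : Conn A (X \ {z}) := by
          refine ⟨⟨c, hcT⟩, ?_⟩
          intro u hu v hv
          exact (hrT u hu).trans (reach_symm (hrT v hv))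
        exact ⟨z, ⟨hXaX hgz.1, hsos, hconnT⟩, hzS, hzCa.2⟩
      obtain ⟨z1, hz1, hz1S, hz1r⟩ := key a0 ha0 b0 hb0 hab0
      obtain ⟨z2, hz2, hz2S, hz2r⟩ := key b0 hb0 a0 ha0 (fun h => hab0 (reach_symm h))
      refine ⟨z1, z2, ?_, hz1, hz2⟩
      rintro rfl
      exact hab0 (hz1r.trans (reach_symm hz2r))

end CCAux2

namespace CCAux3
open CCAux

variable {A : V → V → Prop}

lemma chain_exists [Fintype V] (hacyc : AcyclicDigraph A) :
    ∀ n (X : Set V), X.ncard = n → Conn A X → ∀ z ∈ X, ∀ k, 1 ≤ k → k ≤ n →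
      ∃ Y, CCX A X Y ∧ z ∈ Y ∧ Y.ncard = k := by
  intro n
  induction n using Nat.strong_induction_on with
  | _ n ih =>
    intro X hn hconn z hz k hk1 hkn
    rcases eq_or_lt_of_le hkn with rfl | hlt
    · exact ⟨X, ⟨subset_rfl, hconn, cvx_self X⟩, hz, hn⟩
    · have h2 : 2 ≤ X.ncard := by omega
      obtain ⟨z1, z2, h12, hg1, hg2⟩ := CCAux2.good_two hacyc X.ncard X rfl h2 hconn
      obtain ⟨v, hgv, hvz⟩ : ∃ v, GoodV A X v ∧ v ≠ z := by
        by_cases h : z1 = z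
        · exact ⟨z2, hg2, by rw [← h]; exact h12.symm⟩
        · exact ⟨z1, hg1, h⟩
      have hcard' : (X \ {v}).ncard = n - 1 := by
        rw [Set.ncard_diff_singleton_of_mem hgv.1, hn]
      have hzin : z ∈ X \ {v} := ⟨hz, fun h => hvz (Set.mem_singleton_iff.mp h).symm⟩
      obtain ⟨Y, hY, hzY, hYk⟩ := ih (n-1) (by omega) (X \ {v}) hcard' hgv.2.2 z hzin k hk1 (by omega)
      exact ⟨Y, ⟨hY.1.trans Set.diff_subset, hY.2.1, cvx_lift hgv.2.1 hY.1 hY.2.2⟩, hzY, hYk⟩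

lemma main_count [Fintype V] (hacyc : AcyclicDigraph A) :
    ∀ n (X : Set V), X.ncard = n → Conn A X →
      n * (n + 1) / 2 ≤ {Y | CCX A X Y}.ncard := by
  intro n
  induction n using Nat.strong_induction_on with
  | _ n ih =>
    intro X hn hconn
    rcases Nat.eq_zero_or_pos n with rfl | hpos
    · simp
    rcases eq_or_lt_of_le (show 1 ≤ n from hpos) with h1 | h2
    · have hmem : X ∈ {Y | CCX A X Y} := ⟨subset_rfl, hconn, cvx_self X⟩
      have hp : 0 < {Y | CCX A X Y}.ncard :=
        (Set.ncard_pos (Set.toFinite _)).mpr ⟨X, hmem⟩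
      subst h1
      omega
    · obtain ⟨z1, z2, h12, hg1, hg2⟩ :=
        CCAux2.good_two hacyc X.ncard X rfl (by omega) hconn
      have hcard' : (X \ {z1}).ncard = n - 1 := by
        rw [Set.ncard_diff_singleton_of_mem hg1.1, hn]
      have hIH := ih (n-1) (by omega) (X \ {z1}) hcard' hg1.2.2
      have hsub1 : {Y | CCX A (X \ {z1}) Y} ⊆ {Y | CCX A X Y} := by
        rintro Y ⟨hYs, hYc, hYv⟩
        exact ⟨hYs.trans Set.diff_subset, hYc, cvx_lift hg1.2.1 hYs hYv⟩
      have hchain : ∀ k : Fin n, ∃ Y, (CCX A X Y ∧ z1 ∈ Y) ∧ Y.ncard = k.1 + 1 := by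
        intro k
        obtain ⟨Y, hY1, hY2, hY3⟩ :=
          chain_exists hacyc n X hn hconn z1 hg1.1 (k.1+1) (by omega) (by omega)
        exact ⟨Y, ⟨hY1, hY2⟩, hY3⟩
      choose F hF1 hF2 using hchain
      have hFinj : Function.Injective F := by
        intro i j hij
        have : i.1 + 1 = j.1 + 1 := by rw [← hF2 i, ← hF2 j, hij]
        exact Fin.ext (by omega)
      have hrange : Set.range F ⊆ {Y | CCX A X Y ∧ z1 ∈ Y} := by
        rintro _ ⟨k, rfl⟩; exact hF1 k
      have hrc : (Set.range F).ncard = n := by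
        rw [← Nat.card_coe_set_eq, Nat.card_range_of_injective hFinj,
          Nat.card_eq_fintype_card, Fintype.card_fin]
      have hdisj : Disjoint {Y | CCX A (X \ {z1}) Y} (Set.range F) := by
        rw [Set.disjoint_left]
        rintro Y hY1 hY2
        have hz1Y : z1 ∈ Y := (hrange hY2).2
        exact (hY1.1 hz1Y).2 rfl
      have hunion : {Y | CCX A (X \ {z1}) Y} ∪ Set.range F ⊆ {Y | CCX A X Y} := by
        rintro Y (h | h)
        · exact hsub1 h
        · exact (hrange h).1
      have hle : {Y | CCX A (X \ {z1}) Y}.ncard + n ≤ {Y | CCX A X Y}.ncard := by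
        calc {Y | CCX A (X \ {z1}) Y}.ncard + n
            = ({Y | CCX A (X \ {z1}) Y} ∪ Set.range F).ncard := by
              rw [Set.ncard_union_eq hdisj (Set.toFinite _) (Set.toFinite _), hrc]
          _ ≤ _ := Set.ncard_le_ncard hunion (Set.toFinite _)
      have harith : n * (n + 1) / 2 ≤ (n-1) * ((n-1)+1) / 2 + n := by
        obtain ⟨m, rfl⟩ : ∃ m, n = m + 1 := ⟨n - 1, by omega⟩
        have hm : m + 1 - 1 = m := by omega
        have h1' : (m+1) * (m+1+1) = m * (m + 1) + (m+1) * 2 := by ring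
        rw [hm, h1', Nat.add_mul_div_right _ _ (by norm_num : (0:ℕ) < 2)]
      calc n*(n+1)/2 ≤ (n-1)*((n-1)+1)/2 + n := harith
        _ ≤ {Y | CCX A (X \ {z1}) Y}.ncard + n := Nat.add_le_add_right hIH n
        _ ≤ _ := hle

end CCAux3

namespace CCAux4
open CCAux

variable {A : V → V → Prop}

lemma reach_to_reachable (hacyc : AcyclicDigraph A) {Y : Set V} {a b : V}
    (h : Reach A Y a b) (ha : a ∈ Y) :
    ∀ hb : b ∈ Y, ((SimpleGraph.fromRel A).induce Y).Reachable ⟨a, ha⟩ ⟨b, hb⟩ := by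
  induction h with
  | refl => intro hb; exact SimpleGraph.Reachable.refl _
  | tail hr he ih =>
    rename_i m b'
    intro hb
    have hm : m ∈ Y := he.elim (fun h' => h'.1) (fun h' => h'.2.1)
    have hne : m ≠ b' := by
      rintro rfl
      rcases he with ⟨_, _, hA⟩ | ⟨_, _, hA⟩ <;> exact hacyc _ (Relation.TransGen.single hA)
    have hadj : ((SimpleGraph.fromRel A).induce Y).Adj ⟨m, hm⟩ ⟨b', hb⟩ := by
      rw [SimpleGraph.comap_adj, SimpleGraph.fromRel_adj]
      refine ⟨hne, ?_⟩
      rcases he with ⟨_, _, hA⟩ | ⟨_, _, hA⟩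
      · exact Or.inl hA
      · exact Or.inr hA
    exact SimpleGraph.Reachable.trans (ih hm) hadj.reachable

lemma conn_connectedIn (hacyc : AcyclicDigraph A) {Y : Set V} (h : Conn A Y) :
    ConnectedIn A Y := by
  rw [ConnectedIn, SimpleGraph.connected_iff]
  constructor
  · rintro ⟨u, hu⟩ ⟨v, hv⟩
    exact reach_to_reachable hacyc (h.2 u hu v hv) hu hv
  · obtain ⟨y, hy⟩ := h.1
    exact ⟨⟨y, hy⟩⟩

lemma digraphConnected_conn (h : DigraphConnected A) : Conn A Set.univ := by
  obtain ⟨hpre, hne⟩ := (SimpleGraph.connected_iff _).mp h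
  refine ⟨?_, ?_⟩
  · obtain ⟨v⟩ := hne; exact ⟨v, trivial⟩
  · intro a _ b _
    have hr := (SimpleGraph.reachable_iff_reflTransGen a b).mp (hpre a b)
    refine Relation.ReflTransGen.mono ?_ _ _ hr
    intro x y hxy
    rw [SimpleGraph.fromRel_adj] at hxy
    rcases hxy.2 with h' | h'
    · exact Or.inl ⟨trivial, trivial, h'⟩
    · exact Or.inr ⟨trivial, trivial, h'⟩

end CCAux4

/-- Every connected acyclic digraph of order `n` has at least `n(n+1)/2`
connected convex sets. -/
theorem stmt_4 {V : Type*} [Fintype V] (A : V → V → Prop)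
    (hconn : DigraphConnected A) (hacyc : AcyclicDigraph A) :
    Fintype.card V * (Fintype.card V + 1) / 2 ≤
      {X : Set V | ConnectedIn A X ∧ ConvexIn A X}.ncard := by
  have hconn' : CCAux.Conn A Set.univ := CCAux4.digraphConnected_conn hconn
  have hmain := CCAux3.main_count hacyc (Set.univ : Set V).ncard Set.univ rfl hconn'
  have hcard : (Set.univ : Set V).ncard = Fintype.card V := by
    rw [Set.ncard_univ, Nat.card_eq_fintype_card]
  rw [hcard] at hmain
  refine le_trans hmain (Set.ncard_le_ncard ?_ (Set.toFinite _))
  rintro Y ⟨hYs, hYc, hYv⟩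
  refine ⟨CCAux4.conn_connectedIn hacyc hYc, hYc.1, ?_⟩
  intro a b l ha hb hch hnd
  have hch' : List.Chain (CCAux.Rr A Set.univ) a (l ++ [b]) := by
    refine List.Chain.imp ?_ hch
    intro x y hxy
    exact ⟨trivial, trivial, hxy⟩
  exact hYv a b l ha hb hch' hnd
end

section
/- Let D be a connected acyclic digraph and let s be a vertex of D that is a source or a sink. Then every connected convex set of the digraph D − s (obtained by deleting s) is also a connected convex set of D. -/
/-!
Digraphs are given by an arc relation `A : V → V → Prop` on a vertex type `V`.
A directed path from `a` to `b` is encoded as `a :: (l ++ [b])` where the list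
satisfies `List.Chain A` (consecutive arcs) and `List.Nodup` (distinct vertices);
`l` is the list of internal vertices.
-/

variable {V : Type*}

lemma chain_internal {A : V → V → Prop} :
    ∀ (a : V) (l : List V) (b : V), List.Chain A a (l ++ [b]) →
      ∀ w ∈ l, (∃ u, A u w) ∧ (∃ v, A w v) := by
  intro a l
  induction l generalizing a with
  | nil => intro b _ w hw; simp at hw
  | cons x t ih =>
    intro b h w hw
    rw [List.cons_append] at h
    unfold List.Chain at h
    rw [List.chain_cons] at h
    rcases List.mem_cons.mp hw with hw | hw
    · subst hw
      refine ⟨⟨a, h.1⟩, ?_⟩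
      cases t with
      | nil => simp [List.chain_cons] at h; exact ⟨b, h.2⟩
      | cons y t' => rw [List.cons_append, List.chain_cons] at h; exact ⟨y, h.2.1⟩
    · exact ih x b h.2 w hw
  
/-- If `s` is a source or a sink of a connected acyclic digraph `D`, then every
connected convex set of `D - s` is a connected convex set of `D`. -/
theorem stmt_6 {V : Type*} [Fintype V] (A : V → V → Prop)
    (hconn : DigraphConnected A) (hacyc : AcyclicDigraph A)
    (s : V) (hs : IsSourceIn A s ∨ IsSinkIn A s)
    (X : Set {u : V // u ≠ s})
    (hXc : ConnectedIn (fun u v : {u : V // u ≠ s} => A u.1 v.1) X)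
    (hXx : ConvexIn (fun u v : {u : V // u ≠ s} => A u.1 v.1) X) :
    ConnectedIn A (Subtype.val '' X) ∧ ConvexIn A (Subtype.val '' X) := by
  constructor
  · -- connectedness
    have e : ((SimpleGraph.fromRel fun u v : {u : V // u ≠ s} => A u.1 v.1).induce X) ≃g
        ((SimpleGraph.fromRel A).induce (Subtype.val '' X)) := by
      refine ⟨⟨fun x => ⟨x.1.1, ⟨x.1, x.2, rfl⟩⟩,
        fun v => ⟨⟨v.1, ?_⟩, ?_⟩, ?_, ?_⟩, ?_⟩
      · obtain ⟨x, hx, hxv⟩ := v.2; exact hxv ▸ x.2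
      · obtain ⟨x, hx, hxv⟩ := v.2
        have : x = ⟨v.1, hxv ▸ x.2⟩ := Subtype.ext hxv
        exact this ▸ hx
      · intro x; ext; rfl
      · intro v; ext; rfl
      · intro x y
        simp [SimpleGraph.comap_adj, SimpleGraph.fromRel_adj, Subtype.ext_iff]
    exact e.connected_iff.mp hXc
  · refine ⟨?_, ?_⟩
    · obtain ⟨x, hx⟩ := hXx.1; exact ⟨x.1, x, hx, rfl⟩
    · rintro a b l ⟨a', ha', rfl⟩ ⟨b', hb', rfl⟩ hch hnd w hw
      -- s is not an internal vertex
      have hsne : ∀ w ∈ l, w ≠ s := by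
        intro w hw hws
        subst hws
        obtain ⟨⟨u, hu⟩, ⟨v, hv⟩⟩ := chain_internal _ l _ hch w hw
        rcases hs with h | h
        · exact h u hu
        · exact h v hv
      -- lift the path
      set l' : List {u : V // u ≠ s} := l.attach.map (fun x => ⟨x.1, hsne x.1 x.2⟩) with hl'
      have hmap : l'.map Subtype.val = l := by
        simp [hl', List.map_map, Function.comp]
      have hmap2 : (l' ++ [b']).map Subtype.val = l ++ [b'.1] := by simp [hmap]
      have hch' : List.Chain (fun u v : {u : V // u ≠ s} => A u.1 v.1) a' (l' ++ [b']) := by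
        show List.IsChain _ (a' :: (l' ++ [b']))
        rw [← List.isChain_map (f := (Subtype.val : {u : V // u ≠ s} → V)), List.map_cons, hmap2]
        exact hch
      have hnd' : (a' :: (l' ++ [b'])).Nodup := by
        have : ((a' :: (l' ++ [b'])).map Subtype.val).Nodup := by
          simpa [hmap2] using hnd
        exact this.of_map
      have := hXx.2 a' b' l' ha' hb' hch' hnd' 
      have hwX : (⟨w, hsne w hw⟩ : {u : V // u ≠ s}) ∈ X := by
        apply this
        rw [hl']
        exact List.mem_map.mpr ⟨⟨w, hw⟩, List.mem_attach _ _, rfl⟩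
      exact ⟨_, hwX, rfl⟩
end

section
/- There exists a family of connected acyclic digraphs D_t of order n_t → ∞ and a constant c such that the average size of a convex set of D_t, namely (∑_{C convex} |C|)/co(D_t), is at most c·√(n_t), and likewise the average size of a connected convex set is at most c·√(n_t). -/
/-!
Digraphs are given by an arc relation `A : V → V → Prop` on a vertex type `V`.
A directed path from `a` to `b` is encoded as `a :: (l ++ [b])` where the list
satisfies `List.Chain A` (consecutive arcs) and `List.Nodup` (distinct vertices);
`l` is the list of internal vertices.
-/

variable {V : Type*}

namespace S17
open Finset

noncomputable section
open Classical

def NN (s : ℕ) : ℕ := s^2 + 2*s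

abbrev VV (s : ℕ) := Fin (NN s)

def R (s : ℕ) : VV s → VV s → Prop := fun u v =>
  (u : ℕ) < (v : ℕ) ∧ (2*s ≤ (v : ℕ) ∨ ((u : ℕ) < s ∧ s ≤ (v : ℕ)))

lemma R_lt {s : ℕ} {u v : VV s} (h : R s u v) : (u : ℕ) < (v : ℕ) := h.1

lemma acyclic (s : ℕ) : AcyclicDigraph (R s) := by
  intro v hv
  have h : ∀ a b : VV s, Relation.TransGen (R s) a b → (a : ℕ) < b := by
    intro a b h
    induction h with
    | single h => exact R_lt h
    | tail _ h ih => exact lt_trans ih (R_lt h)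
  exact lt_irrefl _ (h v v hv)

lemma two_s_lt {s : ℕ} (hs : 1 ≤ s) : 2*s < NN s := by
  have : 1 ≤ s^2 := Nat.one_le_pow _ _ hs
  simp only [NN]; omega

/-- the hub vertex h₁ -/
def hub (s : ℕ) (hs : 1 ≤ s) : VV s := ⟨2*s, two_s_lt hs⟩

lemma connected (s : ℕ) (hs : 1 ≤ s) : DigraphConnected (R s) := by
  rw [DigraphConnected, SimpleGraph.connected_iff]
  refine ⟨fun u v => ?_, ⟨hub s hs⟩⟩
  ·
    have key : ∀ w : VV s, (SimpleGraph.fromRel (R s)).Reachable w (hub s hs) := by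
      intro w
      rcases eq_or_ne w (hub s hs) with h | h
      · exact h ▸ SimpleGraph.Reachable.refl _
      · apply SimpleGraph.Adj.reachable
        rw [SimpleGraph.fromRel_adj]
        refine ⟨h, ?_⟩
        have hw : (w : ℕ) ≠ 2*s := fun hc => h (Fin.ext hc)
        rcases lt_or_gt_of_ne hw with hlt | hgt
        · left; exact ⟨hlt, Or.inl (le_refl _)⟩
        · right; refine ⟨hgt, Or.inl ?_⟩
          omega
    exact (key u).trans (key v).symm

/-- region sets -/
def Hs (s : ℕ) : Set (VV s) := {v | 2*s ≤ (v : ℕ)}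
def ABs (s : ℕ) : Set (VV s) := {v | (v : ℕ) < 2*s}

lemma chain_to_low {s : ℕ} {a b : VV s} {l : List (VV s)}
    (hb : (b : ℕ) < 2*s) (hch : List.Chain (R s) a (l ++ [b])) : l = [] := by
  rcases List.eq_nil_or_concat l with rfl | ⟨l', w, rfl⟩
  · rfl
  · exfalso
    have h1 : List.Chain (R s) a (l' ++ [w]) ∧ List.Chain (R s) w [b] := by
      simp only [List.Chain]
      rw [← List.isChain_cons_split]
      simpa [List.Chain, List.append_assoc] using hch
    have hwb : R s w b := by
      have := h1.2
      simpa [List.Chain] using this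
    have hw : (w : ℕ) < s := by
      rcases hwb.2 with h | h
      · omega
      · exact h.1
    rcases List.eq_nil_or_concat l' with rfl | ⟨l'', w', rfl⟩
    · have haw : R s a w := by simpa [List.Chain] using h1.1
      rcases haw.2 with h | h <;> omega
    · have h2 : List.Chain (R s) a (l'' ++ [w']) ∧ List.Chain (R s) w' [w] := by
        simp only [List.Chain]
        rw [← List.isChain_cons_split]
        simpa [List.Chain, List.append_assoc] using h1.1
      have hww : R s w' w := by simpa [List.Chain] using h2.2
      rcases hww.2 with h | h <;> omega

/-- Sets inside A ∪ B are convex. -/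
lemma convex_AB {s : ℕ} {X : Set (VV s)} (hne : X.Nonempty)
    (hX : ∀ x ∈ X, (x : ℕ) < 2*s) : ConvexIn (R s) X := by
  refine ⟨hne, fun a b l ha hb hch _ w hw => ?_⟩
  rw [chain_to_low (hX b hb) hch] at hw
  simp at hw

/-- basic two-step forcing -/
lemma force2 {s : ℕ} {X : Set (VV s)} (hX : ConvexIn (R s) X) {x y w : VV s}
    (hx : x ∈ X) (hy : y ∈ X) (h1 : R s x w) (h2 : R s w y) : w ∈ X := by
  have hxy : (x : ℕ) < w ∧ (w : ℕ) < y := ⟨R_lt h1, R_lt h2⟩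
  refine hX.2 x y [w] hx hy ?_ ?_ w (by simp)
  · simp [List.Chain, h1, h2]
  · have h3 : x ≠ w := fun hc => by rw [hc] at hxy; omega
    have h4 : x ≠ y := fun hc => by rw [hc] at hxy; omega
    have h5 : w ≠ y := fun hc => by rw [hc] at hxy; omega
    simp [h3, h4, h5]

/-- forcing of middle H vertices below an H element of X -/
lemma force_below {s : ℕ} {X : Set (VV s)} (hX : ConvexIn (R s) X) {x y w : VV s}
    (hx : x ∈ X) (hy : y ∈ X) (hy2 : 2*s ≤ (y : ℕ))
    (hw2 : 2*s ≤ (w : ℕ)) (hxw : (x : ℕ) < w) (hwy : (w : ℕ) < y) : w ∈ X :=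
  force2 hX hx hy ⟨hxw, Or.inl hw2⟩ ⟨hwy, Or.inl hy2⟩

/-- forcing of all of B when some a ∈ A and some H element are in X -/
lemma force_B {s : ℕ} {X : Set (VV s)} (hX : ConvexIn (R s) X) {a y : VV s}
    (ha : a ∈ X) (hy : y ∈ X) (ha1 : (a : ℕ) < s) (hy2 : 2*s ≤ (y : ℕ))
    {b : VV s} (hb : s ≤ (b : ℕ)) (hb2 : (b : ℕ) < 2*s) : b ∈ X :=
  force2 hX ha hy ⟨by omega, Or.inr ⟨ha1, hb⟩⟩ ⟨by omega, Or.inl hy2⟩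

def rangeF (s a b : ℕ) : Finset (VV s) := univ.filter (fun v => a ≤ (v : ℕ) ∧ (v : ℕ) < b)

lemma mem_rangeF {s a b : ℕ} {v : VV s} : v ∈ rangeF s a b ↔ a ≤ (v : ℕ) ∧ (v : ℕ) < b := by
  simp [rangeF]

lemma card_rangeF (s a b : ℕ) (hb : b ≤ NN s) (hab : a ≤ b) : (rangeF s a b).card = b - a := by
  classical
  rw [show b - a = (Finset.range (b - a)).card from (Finset.card_range _).symm]
  refine Finset.card_bij' (fun v _ => (v : ℕ) - a)
    (fun i hi => (⟨a + i, by simp only [Finset.mem_range] at hi; omega⟩ : VV s))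
    ?_ ?_ ?_ ?_
  · intro v hv
    rw [mem_rangeF] at hv
    simp only [Finset.mem_range]
    omega
  · intro i hi
    simp only [Finset.mem_range] at hi
    rw [mem_rangeF]
    simp only []
    omega
  · intro v hv
    rw [mem_rangeF] at hv
    apply Fin.ext
    simp only []
    omega
  · intro i hi
    simp only [Finset.mem_range] at hi
    simp only []
    omega

def Af (s : ℕ) : Finset (VV s) := rangeF s 0 s
def Bf (s : ℕ) : Finset (VV s) := rangeF s s (2*s)

lemma card_Af (s : ℕ) : (Af s).card = s := by
  have := card_rangeF s 0 s (by unfold NN; nlinarith) (Nat.zero_le s)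
  simpa [Af] using this

lemma card_Bf (s : ℕ) : (Bf s).card = s := by
  have := card_rangeF s s (2*s) (Nat.le_add_left (2*s) (s^2)) (by omega)
  simp only [Bf] at *
  omega

def HF (s : ℕ) (C : Set (VV s)) : Finset (VV s) := (C ∩ Hs s).toFinite.toFinset

lemma mem_HF {s : ℕ} {C : Set (VV s)} {v : VV s} :
    v ∈ HF s C ↔ v ∈ C ∧ 2*s ≤ (v : ℕ) := by
  simp [HF, Hs, Set.mem_inter_iff, Set.mem_setOf_eq]

lemma HF_nonempty {s : ℕ} {C : Set (VV s)} (hne : (C ∩ Hs s).Nonempty) :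
    (HF s C).Nonempty := by
  rw [HF, Set.Finite.toFinset_nonempty]
  exact hne

def key (s : ℕ) (C : Set (VV s)) : WithBot (VV s) × WithBot (VV s) × Set (VV s) :=
  ((HF s C).max, (HF s C).min, C ∩ ABs s)

lemma inter_H_eq {s : ℕ} {C : Set (VV s)} (hC : ConvexIn (R s) C) {M m0 : VV s}
    (hM : (HF s C).max = some M) (hm : (HF s C).min = some m0) :
    C ∩ Hs s = {v | m0 ≤ v ∧ v ≤ M} := by
  have hMC : M ∈ C ∧ 2*s ≤ (M : ℕ) := mem_HF.mp (Finset.mem_of_max hM)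
  have hmC : m0 ∈ C ∧ 2*s ≤ (m0 : ℕ) := mem_HF.mp (Finset.mem_of_min hm)
  ext v
  simp only [Set.mem_inter_iff, Set.mem_setOf_eq, Hs]
  constructor
  · intro hv
    have hv' : v ∈ HF s C := mem_HF.mpr ⟨hv.1, hv.2⟩
    constructor
    · have := Finset.min_le hv'
      rw [hm] at this
      exact WithTop.coe_le_coe.mp this
    · have := Finset.le_max hv'
      rw [hM] at this
      exact WithBot.coe_le_coe.mp this
  · rintro ⟨h1, h2⟩
    have h1' : (m0 : ℕ) ≤ (v : ℕ) := h1
    have h2' : (v : ℕ) ≤ (M : ℕ) := h2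
    have hv2 : 2*s ≤ (v : ℕ) := le_trans hmC.2 h1'
    rcases eq_or_lt_of_le h1' with heq | hlt1
    · have : m0 = v := Fin.ext heq
      exact this ▸ ⟨hmC.1, hmC.2⟩
    rcases eq_or_lt_of_le h2' with heq2 | hlt2
    · have : v = M := Fin.ext heq2
      exact this ▸ ⟨hMC.1, hMC.2⟩
    exact ⟨force_below hC hmC.1 hMC.1 hMC.2 hv2 hlt1 hlt2, hv2⟩

lemma hub_val {s : ℕ} (hs : 1 ≤ s) : ((hub s hs : VV s) : ℕ) = 2*s := rfl

lemma min_eq_hub {s : ℕ} (hs1 : 1 ≤ s) {C : Set (VV s)} (hC : ConvexIn (R s) C) {x : VV s}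
    (hx : x ∈ C) (hx2 : (x : ℕ) < 2*s) {M : VV s} (hM : (HF s C).max = some M) :
    (HF s C).min = some (hub s hs1) := by
  have hMC := mem_HF.mp (Finset.mem_of_max hM)
  have hhub : hub s hs1 ∈ HF s C := by
    rcases eq_or_lt_of_le hMC.2 with h | h
    · have hMh : M = hub s hs1 := Fin.ext (by rw [hub_val]; omega)
      rw [← hMh]
      exact Finset.mem_of_max hM
    · refine mem_HF.mpr ⟨force_below hC hx hMC.1 hMC.2 ?_ ?_ ?_, ?_⟩
      · rw [hub_val]
      · rw [hub_val]; omega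
      · rw [hub_val]; exact h
      · rw [hub_val]
  obtain ⟨m0, hm0⟩ := Finset.min_of_nonempty ⟨_, hhub⟩
  have h1 := Finset.min_le hhub
  rw [hm0] at h1
  have h1' : (m0 : ℕ) ≤ 2*s := by
    have := WithTop.coe_le_coe.mp h1
    exact this
  have h2 := (mem_HF.mp (Finset.mem_of_min hm0)).2
  have hme : m0 = hub s hs1 := Fin.ext (by rw [hub_val]; omega)
  rw [hm0, hme]
  rfl

lemma C_eq_parts {s : ℕ} (C : Set (VV s)) : C = (C ∩ ABs s) ∪ (C ∩ Hs s) := by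
  ext v
  simp only [Set.mem_union, Set.mem_inter_iff, ABs, Hs, Set.mem_setOf_eq]
  constructor
  · intro hv
    rcases lt_or_ge (v : ℕ) (2*s) with h | h
    · exact Or.inl ⟨hv, h⟩
    · exact Or.inr ⟨hv, h⟩
  · rintro (⟨hv, _⟩ | ⟨hv, _⟩) <;> exact hv

lemma key_inj {s : ℕ} {C C' : Set (VV s)} (hC : ConvexIn (R s) C) (hC' : ConvexIn (R s) C')
    (hne : (C ∩ Hs s).Nonempty) (h : key s C = key s C') : C = C' := by
  obtain ⟨M, hM⟩ := Finset.max_of_nonempty (HF_nonempty hne)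
  obtain ⟨m0, hm0⟩ := Finset.min_of_nonempty (HF_nonempty hne)
  have hmax : (HF s C).max = (HF s C').max := congrArg (fun p => p.1) h
  have hmin : (HF s C).min = (HF s C').min := congrArg (fun p => p.2.1) h
  have hab : C ∩ ABs s = C' ∩ ABs s := congrArg (fun p => p.2.2) h
  rw [C_eq_parts C, C_eq_parts C', hab,
    inter_H_eq hC hM hm0, inter_H_eq hC' (hmax ▸ hM) (hmin ▸ hm0)]


def TT (s : ℕ) (hs : 1 ≤ s) : Finset (WithBot (VV s) × WithBot (VV s) × Set (VV s)) :=
  ((univ ×ˢ univ : Finset (VV s × VV s)).image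
      (fun p => ((p.1 : WithBot (VV s)), (p.2 : WithBot (VV s)), (∅ : Set (VV s))))) ∪
  (((univ ×ˢ (Bf s).powerset : Finset (VV s × Finset (VV s)))).image
      (fun p => ((p.1 : WithBot (VV s)), (hub s hs : WithBot (VV s)), (↑p.2 : Set (VV s))))) ∪
  (((univ ×ˢ (Af s).powerset : Finset (VV s × Finset (VV s)))).image
      (fun p => ((p.1 : WithBot (VV s)), (hub s hs : WithBot (VV s)),
        ((↑p.2 : Set (VV s)) ∪ (↑(Bf s) : Set (VV s))))))

lemma card_TT (s : ℕ) (hs : 1 ≤ s) :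
    (TT s hs).card ≤ NN s * NN s + 2^s * NN s + 2^s * NN s := by
  have hu : (univ : Finset (VV s)).card = NN s := by
    rw [Finset.card_univ, Fintype.card_fin]
  have c1 : ((univ ×ˢ univ : Finset (VV s × VV s)).image
      (fun p => ((p.1 : WithBot (VV s)), (p.2 : WithBot (VV s)), (∅ : Set (VV s))))).card ≤
      NN s * NN s := by
    refine le_trans (Finset.card_image_le) ?_
    rw [Finset.card_product, hu]
  have c2 : (((univ ×ˢ (Bf s).powerset : Finset (VV s × Finset (VV s)))).image
      (fun p => ((p.1 : WithBot (VV s)), (hub s hs : WithBot (VV s)),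
        (↑p.2 : Set (VV s))))).card ≤ NN s * 2^s := by
    refine le_trans (Finset.card_image_le) ?_
    rw [Finset.card_product, hu, Finset.card_powerset, card_Bf]
  have c3 : (((univ ×ˢ (Af s).powerset : Finset (VV s × Finset (VV s)))).image
      (fun p => ((p.1 : WithBot (VV s)), (hub s hs : WithBot (VV s)),
        ((↑p.2 : Set (VV s)) ∪ (↑(Bf s) : Set (VV s)))))).card ≤ NN s * 2^s := by
    refine le_trans (Finset.card_image_le) ?_
    rw [Finset.card_product, hu, Finset.card_powerset, card_Af]
  calc (TT s hs).card ≤ _ + _ := Finset.card_union_le _ _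
    _ ≤ (_ + _) + _ := by gcongr; exact Finset.card_union_le _ _
    _ ≤ (NN s * NN s + NN s * 2^s) + NN s * 2^s := by gcongr
    _ = NN s * NN s + 2^s * NN s + 2^s * NN s := by ring

lemma mem_Af {s : ℕ} {v : VV s} : v ∈ Af s ↔ (v : ℕ) < s := by
  rw [Af, mem_rangeF]; omega

lemma mem_Bf {s : ℕ} {v : VV s} : v ∈ Bf s ↔ s ≤ (v : ℕ) ∧ (v : ℕ) < 2*s := by
  rw [Bf, mem_rangeF]

lemma key_mem_TT {s : ℕ} (hs : 1 ≤ s) {C : Set (VV s)} (hC : ConvexIn (R s) C)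
    (hne : (C ∩ Hs s).Nonempty) : key s C ∈ TT s hs := by
  obtain ⟨M, hM⟩ := Finset.max_of_nonempty (HF_nonempty hne)
  have hMC := mem_HF.mp (Finset.mem_of_max hM)
  by_cases hA : ∃ a ∈ C, (a : ℕ) < s
  · -- case T3
    obtain ⟨a, haC, ha⟩ := hA
    have hmin := min_eq_hub hs hC haC (by omega) hM
    have hBfull : ∀ b : VV s, s ≤ (b : ℕ) → (b : ℕ) < 2*s → b ∈ C := fun b h1 h2 =>
      force_B hC haC hMC.1 ha hMC.2 h1 h2
    set Pf : Finset (VV s) := (C ∩ {v : VV s | (v : ℕ) < s}).toFinite.toFinset with hPf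
    have hP : (↑Pf : Set (VV s)) ∪ (↑(Bf s) : Set (VV s)) = C ∩ ABs s := by
      ext v
      simp only [Set.mem_union, Finset.mem_coe, Set.Finite.mem_toFinset, hPf,
        Set.mem_inter_iff, Set.mem_setOf_eq, ABs, mem_Bf]
      constructor
      · rintro (⟨hvC, h⟩ | ⟨h1, h2⟩)
        · exact ⟨hvC, by omega⟩
        · exact ⟨hBfull v h1 h2, h2⟩
      · rintro ⟨hvC, hv2⟩
        rcases lt_or_ge (v : ℕ) s with h | h
        · exact Or.inl ⟨hvC, h⟩
        · exact Or.inr ⟨h, hv2⟩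
    refine Finset.mem_union_right _ (Finset.mem_image.mpr ⟨(M, Pf), ?_, ?_⟩)
    · rw [Finset.mem_product, Finset.mem_powerset]
      refine ⟨Finset.mem_univ _, fun v hv => ?_⟩
      rw [hPf, Set.Finite.mem_toFinset] at hv
      exact mem_Af.mpr hv.2
    · rw [key, hM, hmin, ← hP]
      rfl
  · by_cases hB : ∃ b ∈ C, (b : ℕ) < 2*s
    · -- case T2
      obtain ⟨b, hbC, hb⟩ := hB
      have hmin := min_eq_hub hs hC hbC hb hM
      set Qf : Finset (VV s) := (C ∩ ABs s).toFinite.toFinset with hQf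
      have hQ : (↑Qf : Set (VV s)) = C ∩ ABs s := Set.Finite.coe_toFinset _
      refine Finset.mem_union_left _ (Finset.mem_union_right _
        (Finset.mem_image.mpr ⟨(M, Qf), ?_, ?_⟩))
      · rw [Finset.mem_product, Finset.mem_powerset]
        refine ⟨Finset.mem_univ _, fun v hv => ?_⟩
        rw [hQf, Set.Finite.mem_toFinset] at hv
        have hv2 : (v : ℕ) < 2*s := hv.2
        have hv1 : s ≤ (v : ℕ) := by
          by_contra hc
          exact hA ⟨v, hv.1, by omega⟩
        exact mem_Bf.mpr ⟨hv1, hv2⟩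
      · rw [key, hM, hmin, ← hQ]
        rfl
    · -- case T1
      obtain ⟨m0, hm0⟩ := Finset.min_of_nonempty (HF_nonempty hne)
      have hempty : C ∩ ABs s = ∅ := by
        ext v
        simp only [Set.mem_inter_iff, ABs, Set.mem_setOf_eq, Set.mem_empty_iff_false, iff_false,
          not_and]
        intro hvC hv2
        exact hB ⟨v, hvC, hv2⟩
      refine Finset.mem_union_left _ (Finset.mem_union_left _
        (Finset.mem_image.mpr ⟨(M, m0), by simp, ?_⟩))
      rw [key, hM, hm0, hempty]
      rfl

lemma card_Htouch {s : ℕ} (hs : 1 ≤ s) (G : Finset (Set (VV s)))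
    (hG : ∀ C ∈ G, ConvexIn (R s) C ∧ (C ∩ Hs s).Nonempty) :
    G.card ≤ NN s * NN s + 2^s * NN s + 2^s * NN s := by
  refine le_trans (Finset.card_le_card_of_injOn (key s)
    (fun C hCm => key_mem_TT hs (hG C hCm).1 (hG C hCm).2) ?_) (card_TT s hs)
  intro C hCm C' hCm' h
  rw [Finset.mem_coe] at hCm hCm'
  exact key_inj (hG C hCm).1 (hG C' hCm').1 (hG C hCm).2 h

def LB (s : ℕ) : Finset (Set (VV s)) :=
  ((((Af s).powerset.erase ∅) ×ˢ (((Bf s).powerset.erase ∅)) :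
      Finset (Finset (VV s) × Finset (VV s)))).image
    (fun pq => ((↑pq.1 : Set (VV s)) ∪ (↑pq.2 : Set (VV s))))

lemma LB_injOn (s : ℕ) : Set.InjOn (fun pq : Finset (VV s) × Finset (VV s) =>
    ((↑pq.1 : Set (VV s)) ∪ (↑pq.2 : Set (VV s))))
    ↑((((Af s).powerset.erase ∅) ×ˢ (((Bf s).powerset.erase ∅)))) := by
  rintro ⟨P, Q⟩ hPQ ⟨P', Q'⟩ hPQ' h
  simp only [Finset.mem_coe, Finset.mem_product, Finset.mem_erase, Finset.mem_powerset] at hPQ hPQ'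
  simp only [] at h
  have hPA : ∀ v ∈ P, (v : ℕ) < s := fun v hv => mem_Af.mp (hPQ.1.2 hv)
  have hP'A : ∀ v ∈ P', (v : ℕ) < s := fun v hv => mem_Af.mp (hPQ'.1.2 hv)
  have hQB : ∀ v ∈ Q, s ≤ (v : ℕ) := fun v hv => (mem_Bf.mp (hPQ.2.2 hv)).1
  have hQ'B : ∀ v ∈ Q', s ≤ (v : ℕ) := fun v hv => (mem_Bf.mp (hPQ'.2.2 hv)).1
  have hmem : ∀ v : VV s, (v ∈ P ∨ v ∈ Q) ↔ (v ∈ P' ∨ v ∈ Q') := by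
    intro v
    have := Set.ext_iff.mp h v
    simpa [Set.mem_union] using this
  have hP : P = P' := by
    ext v
    constructor
    · intro hv
      rcases (hmem v).mp (Or.inl hv) with h' | h'
      · exact h'
      · exact absurd (hQ'B v h') (by have := hPA v hv; omega)
    · intro hv
      rcases (hmem v).mpr (Or.inl hv) with h' | h'
      · exact h'
      · exact absurd (hQB v h') (by have := hP'A v hv; omega)
  have hQ : Q = Q' := by
    ext v
    constructor
    · intro hv
      rcases (hmem v).mp (Or.inr hv) with h' | h'
      · exact absurd (hP'A v h') (by have := hQB v hv; omega)
      · exact h'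
    · intro hv
      rcases (hmem v).mpr (Or.inr hv) with h' | h'
      · exact absurd (hPA v h') (by have := hQ'B v hv; omega)
      · exact h'
  rw [Prod.mk.injEq]
  exact ⟨hP, hQ⟩

lemma card_LB (s : ℕ) : (LB s).card = (2^s - 1) * (2^s - 1) := by
  rw [LB, Finset.card_image_of_injOn (LB_injOn s), Finset.card_product,
    Finset.card_erase_of_mem (Finset.empty_mem_powerset _),
    Finset.card_erase_of_mem (Finset.empty_mem_powerset _),
    Finset.card_powerset, Finset.card_powerset, card_Af, card_Bf]

lemma LB_convex (s : ℕ) : ∀ X ∈ LB s, ConvexIn (R s) X := by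
  intro X hX
  rw [LB, Finset.mem_image] at hX
  obtain ⟨⟨P, Q⟩, hPQ, rfl⟩ := hX
  simp only [Finset.mem_product, Finset.mem_erase, Finset.mem_powerset] at hPQ
  apply convex_AB
  · obtain ⟨p, hp⟩ := Finset.nonempty_iff_ne_empty.mpr hPQ.1.1
    exact ⟨p, Or.inl hp⟩
  · rintro x (hx | hx)
    · have := mem_Af.mp (hPQ.1.2 hx); omega
    · exact (mem_Bf.mp (hPQ.2.2 hx)).2

lemma LB_connected (s : ℕ) : ∀ X ∈ LB s, ConnectedIn (R s) X := by
  intro X hX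
  rw [LB, Finset.mem_image] at hX
  obtain ⟨⟨P, Q⟩, hPQ, rfl⟩ := hX
  simp only [Finset.mem_product, Finset.mem_erase, Finset.mem_powerset] at hPQ
  obtain ⟨p0, hp0⟩ := Finset.nonempty_iff_ne_empty.mpr hPQ.1.1
  obtain ⟨q0, hq0⟩ := Finset.nonempty_iff_ne_empty.mpr hPQ.2.1
  have hp0s : (p0 : ℕ) < s := mem_Af.mp (hPQ.1.2 hp0)
  have hq0s : s ≤ (q0 : ℕ) ∧ (q0 : ℕ) < 2*s := mem_Bf.mp (hPQ.2.2 hq0)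
  set X : Set (VV s) := (↑P : Set (VV s)) ∪ (↑Q : Set (VV s)) with hXdef
  have adjPQ : ∀ x y : VV s, (x : ℕ) < s → s ≤ (y : ℕ) → (y : ℕ) < 2*s →
      (SimpleGraph.fromRel (R s)).Adj x y := by
    intro x y h1 h2 h3
    rw [SimpleGraph.fromRel_adj]
    refine ⟨fun hc => by subst hc; omega, Or.inl ⟨by omega, Or.inr ⟨h1, h2⟩⟩⟩
  rw [ConnectedIn, SimpleGraph.connected_iff]
  constructor
  · rintro ⟨u, hu⟩ ⟨v, hv⟩
    have key : ∀ w : VV s, (hw : w ∈ X) →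
        ((SimpleGraph.fromRel (R s)).induce X).Reachable ⟨w, hw⟩
          ⟨q0, Or.inr (Finset.mem_coe.mpr hq0)⟩ := by
      intro w hw
      rcases hw with hw | hw
      · -- w ∈ P
        have hws : (w : ℕ) < s := mem_Af.mp (hPQ.1.2 (Finset.mem_coe.mp hw))
        exact SimpleGraph.Adj.reachable (by
          simp only [SimpleGraph.comap_adj, Function.Embedding.coe_subtype]
          exact adjPQ w q0 hws hq0s.1 hq0s.2)
      · -- w ∈ Q
        have hws := mem_Bf.mp (hPQ.2.2 (Finset.mem_coe.mp hw))
        have r1 : ((SimpleGraph.fromRel (R s)).induce X).Adj ⟨w, Or.inr hw⟩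
            ⟨p0, Or.inl (Finset.mem_coe.mpr hp0)⟩ := by
          simp only [SimpleGraph.comap_adj, Function.Embedding.coe_subtype]
          exact (adjPQ p0 w hp0s hws.1 hws.2).symm
        have r2 : ((SimpleGraph.fromRel (R s)).induce X).Adj
            ⟨p0, Or.inl (Finset.mem_coe.mpr hp0)⟩ ⟨q0, Or.inr (Finset.mem_coe.mpr hq0)⟩ := by
          simp only [SimpleGraph.comap_adj, Function.Embedding.coe_subtype]
          exact adjPQ p0 q0 hp0s hq0s.1 hq0s.2
        exact (SimpleGraph.Adj.reachable r1).trans (SimpleGraph.Adj.reachable r2)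
    exact (key u hu).trans (key v hv).symm
  · exact ⟨⟨q0, Or.inr (Finset.mem_coe.mpr hq0)⟩⟩

def ABf (s : ℕ) : Finset (VV s) := rangeF s 0 (2*s)

lemma card_ABf (s : ℕ) : (ABf s).card = 2*s := by
  have := card_rangeF s 0 (2*s) (Nat.le_add_left (2*s) (s^2)) (Nat.zero_le _)
  simpa [ABf] using this

lemma ncard_le_pointwise {s : ℕ} {C : Set (VV s)} (hC : ConvexIn (R s) C) :
    C.ncard ≤ 2*s + (if (C ∩ Hs s).Nonempty then NN s else 0) := by
  have h1 : C.ncard ≤ (C ∩ ABs s).ncard + (C ∩ Hs s).ncard := by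
    calc C.ncard = ((C ∩ ABs s) ∪ (C ∩ Hs s)).ncard := by rw [← C_eq_parts]
      _ ≤ _ := Set.ncard_union_le _ _
  have h2 : (C ∩ ABs s).ncard ≤ 2*s := by
    have hsub : C ∩ ABs s ⊆ (↑(ABf s) : Set (VV s)) := by
      rintro v ⟨_, hv⟩
      simp only [Finset.mem_coe, ABf, mem_rangeF]
      exact ⟨Nat.zero_le _, hv⟩
    calc (C ∩ ABs s).ncard ≤ (↑(ABf s) : Set (VV s)).ncard :=
          Set.ncard_le_ncard hsub (Set.toFinite _)
      _ = (ABf s).card := Set.ncard_coe_finset _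
      _ = 2*s := card_ABf s
  have h3 : (C ∩ Hs s).ncard ≤ (if (C ∩ Hs s).Nonempty then NN s else 0) := by
    by_cases h : (C ∩ Hs s).Nonempty
    · rw [if_pos h]
      calc (C ∩ Hs s).ncard ≤ (Set.univ : Set (VV s)).ncard :=
            Set.ncard_le_ncard (Set.subset_univ _) (Set.toFinite _)
        _ = NN s := by rw [Set.ncard_univ, Nat.card_eq_fintype_card, Fintype.card_fin]
    · rw [if_neg h, Set.not_nonempty_iff_eq_empty.mp h]
      simp
  omega

lemma sum_le (s : ℕ) (hs : 1 ≤ s) (G : Finset (Set (VV s)))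
    (hG : ∀ C ∈ G, ConvexIn (R s) C)
    (hnum : NN s * (NN s * NN s + 2^s * NN s + 2^s * NN s) ≤ (2^s - 1) * (2^s - 1))
    (hcard : (2^s - 1) * (2^s - 1) ≤ G.card) :
    ∑ C ∈ G, C.ncard ≤ (2*s + 1) * G.card := by
  have step1 : ∑ C ∈ G, C.ncard ≤
      ∑ C ∈ G, (2*s + (if (C ∩ Hs s).Nonempty then NN s else 0)) :=
    Finset.sum_le_sum (fun C hC => ncard_le_pointwise (hG C hC))
  have step2 : ∑ C ∈ G, (2*s + (if (C ∩ Hs s).Nonempty then NN s else 0)) =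
      2*s*G.card + ∑ C ∈ G, (if (C ∩ Hs s).Nonempty then NN s else 0) := by
    rw [Finset.sum_add_distrib, Finset.sum_const, smul_eq_mul, mul_comm]
  have step3 : ∑ C ∈ G, (if (C ∩ Hs s).Nonempty then NN s else 0) =
      (G.filter (fun C => (C ∩ Hs s).Nonempty)).card * NN s := by
    rw [← Finset.sum_filter, Finset.sum_const, smul_eq_mul]
  have step4 : (G.filter (fun C => (C ∩ Hs s).Nonempty)).card ≤
      NN s * NN s + 2^s * NN s + 2^s * NN s := by
    apply card_Htouch hs
    intro C hC
    rw [Finset.mem_filter] at hC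
    exact ⟨hG C hC.1, hC.2⟩
  have step5 : (G.filter (fun C => (C ∩ Hs s).Nonempty)).card * NN s ≤ G.card := by
    calc (G.filter (fun C => (C ∩ Hs s).Nonempty)).card * NN s
        ≤ (NN s * NN s + 2^s * NN s + 2^s * NN s) * NN s := by
          exact Nat.mul_le_mul_right _ step4
      _ = NN s * (NN s * NN s + 2^s * NN s + 2^s * NN s) := by ring
      _ ≤ (2^s - 1) * (2^s - 1) := hnum
      _ ≤ G.card := hcard
  have h6 : ∑ C ∈ G, C.ncard ≤
      2*s*G.card + (G.filter (fun C => (C ∩ Hs s).Nonempty)).card * NN s := by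
    rw [step3] at step2
    omega
  calc ∑ C ∈ G, C.ncard
      ≤ 2*s*G.card + (G.filter (fun C => (C ∩ Hs s).Nonempty)).card * NN s := h6
    _ ≤ 2*s*G.card + G.card := by omega
    _ = (2*s + 1) * G.card := by ring

lemma arith_helper (j : ℕ) (hj : 6 ≤ j) : 4*j + 6 ≤ 2^j := by
  induction j with
  | zero => omega
  | succ n ih =>
    rcases Nat.lt_or_ge n 6 with h | h
    · interval_cases n <;> simp_all <;> omega
    · have h4 : (4 : ℕ) ≤ 2^n := le_trans (by norm_num) (Nat.pow_le_pow_right (by norm_num) h)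
      have := ih (by omega)
      rw [pow_succ]
      omega

lemma numeric (j : ℕ) (hj : 6 ≤ j) :
    NN (2^j) * (NN (2^j) * NN (2^j) + 2^(2^j) * NN (2^j) + 2^(2^j) * NN (2^j)) ≤
      (2^(2^j) - 1) * (2^(2^j) - 1) := by
  have hkey : 4*j + 6 ≤ 2^j := arith_helper j hj
  have hNN : NN (2^j) ≤ 2^(2*j+1) := by
    have h1 : ((2:ℕ)^j) ^ 2 = 2^(2*j) := by
      rw [← pow_mul]
      ring_nf
    have h2 : 2 * 2^j = 2^(j+1) := by
      rw [pow_succ]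
      ring
    have h3 : (2:ℕ)^(j+1) ≤ 2^(2*j) := Nat.pow_le_pow_right (by norm_num) (by omega)
    have h4 : (2:ℕ)^(2*j) + 2^(2*j) = 2^(2*j+1) := by
      rw [pow_succ]
      ring
    unfold NN
    omega
  have hNN2s : NN (2^j) ≤ 2^(2^j) :=
    le_trans hNN (Nat.pow_le_pow_right (by norm_num) (by omega))
  set n := NN (2^j) with hn
  have hL : n * (n*n + 2^(2^j)*n + 2^(2^j)*n) ≤
      2^(2*j+1) * (3 * (2^(2^j) * 2^(2*j+1))) := by
    have hin : n*n + 2^(2^j)*n + 2^(2^j)*n ≤ 3 * (2^(2^j) * 2^(2*j+1)) := by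
      have e1 : n*n ≤ 2^(2^j)*2^(2*j+1) := Nat.mul_le_mul hNN2s hNN
      have e2 : 2^(2^j)*n ≤ 2^(2^j)*2^(2*j+1) := Nat.mul_le_mul_left _ hNN
      omega
    exact Nat.mul_le_mul hNN hin
  have hexp : 2^(2*j+1) * (3 * (2^(2^j) * 2^(2*j+1))) ≤ 2^(2^j + 4*j + 4) := by
    have h5 : (3:ℕ) ≤ 2^2 := by norm_num
    calc 2^(2*j+1) * (3 * (2^(2^j) * 2^(2*j+1)))
        ≤ 2^(2*j+1) * (2^2 * (2^(2^j) * 2^(2*j+1))) := by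
          apply Nat.mul_le_mul_left
          apply Nat.mul_le_mul_right
          exact h5
      _ = 2^(2^j + 4*j + 4) := by
          simp only [← pow_add]
          congr 1
          ring
  have hR : 2^(2^j + 4*j + 4) ≤ (2^(2^j) - 1) * (2^(2^j) - 1) := by
    obtain ⟨t, ht⟩ : ∃ t, 2^j = t + 1 := ⟨2^j - 1, by
      have := Nat.two_pow_pos j
      omega⟩
    have h1 : 2^t ≤ 2^(2^j) - 1 := by
      rw [ht, pow_succ]
      have := Nat.two_pow_pos t
      omega
    calc 2^(2^j + 4*j + 4) ≤ 2^(t + t) := Nat.pow_le_pow_right (by norm_num) (by omega)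
      _ = 2^t * 2^t := pow_add 2 t t
      _ ≤ (2^(2^j) - 1) * (2^(2^j) - 1) := Nat.mul_le_mul h1 h1
  exact le_trans (le_trans hL hexp) hR

lemma main_ineq (j : ℕ) (hj : 6 ≤ j) (G : Finset (Set (VV (2^j))))
    (hG : ∀ C ∈ G, ConvexIn (R (2^j)) C) (hLB : LB (2^j) ⊆ G) :
    (∑ C ∈ G, (C.ncard : ℝ)) / (G.card : ℝ) ≤ 3 * Real.sqrt (NN (2^j)) := by
  have hs1 : 1 ≤ 2^j := Nat.one_le_two_pow
  have hcard : (2^(2^j) - 1) * (2^(2^j) - 1) ≤ G.card :=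
    le_trans (le_of_eq (card_LB (2^j)).symm) (Finset.card_le_card hLB)
  have hsum : ∑ C ∈ G, C.ncard ≤ (2*(2^j) + 1) * G.card :=
    sum_le (2^j) hs1 G hG (numeric j hj) hcard
  have hpos : 0 < G.card := by
    have h2 : (2:ℕ) ≤ 2^(2^j) := by
      calc (2:ℕ) = 2^1 := (pow_one 2).symm
        _ ≤ 2^(2^j) := Nat.pow_le_pow_right (by norm_num) hs1
    have : (1:ℕ) ≤ (2^(2^j) - 1) * (2^(2^j) - 1) := by
      have : 1 ≤ 2^(2^j) - 1 := by omega
      exact Nat.one_le_iff_ne_zero.mpr (by positivity)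
    omega
  have hposR : (0:ℝ) < (G.card : ℝ) := by exact_mod_cast hpos
  rw [div_le_iff₀ hposR]
  have hsq : ((2^j : ℕ) : ℝ) ≤ Real.sqrt (NN (2^j)) := by
    apply Real.le_sqrt_of_sq_le
    rw [← Nat.cast_pow]
    apply Nat.cast_le.mpr
    unfold NN
    omega
  calc (∑ C ∈ G, (C.ncard : ℝ)) = ((∑ C ∈ G, C.ncard : ℕ) : ℝ) := by
        rw [Nat.cast_sum]
    _ ≤ (((2*(2^j) + 1) * G.card : ℕ) : ℝ) := Nat.cast_le.mpr hsum
    _ = ((2*(2^j) + 1 : ℕ) : ℝ) * (G.card : ℝ) := by push_cast; ring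
    _ ≤ (3 * Real.sqrt (NN (2^j))) * (G.card : ℝ) := by
        apply mul_le_mul_of_nonneg_right ?_ (le_of_lt hposR)
        have h1 : ((2*(2^j) + 1 : ℕ) : ℝ) ≤ 3 * ((2^j : ℕ) : ℝ) := by
          push_cast
          have : (1:ℝ) ≤ ((2:ℝ))^j := by
            exact_mod_cast Nat.one_le_two_pow (n := j)
          push_cast
          nlinarith
        calc ((2*(2^j) + 1 : ℕ) : ℝ) ≤ 3 * ((2^j : ℕ) : ℝ) := h1
          _ ≤ 3 * Real.sqrt (NN (2^j)) := by nlinarith [hsq]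

lemma per_k (j : ℕ) (hj : 6 ≤ j) :
    (∑ᶠ C ∈ {X : Set (VV (2^j)) | ConvexIn (R (2^j)) X}, (C.ncard : ℝ)) /
        ({X : Set (VV (2^j)) | ConvexIn (R (2^j)) X}.ncard : ℝ) ≤
      3 * Real.sqrt (NN (2^j)) ∧
    (∑ᶠ C ∈ {X : Set (VV (2^j)) | ConnectedIn (R (2^j)) X ∧ ConvexIn (R (2^j)) X},
        (C.ncard : ℝ)) /
        ({X : Set (VV (2^j)) | ConnectedIn (R (2^j)) X ∧
            ConvexIn (R (2^j)) X}.ncard : ℝ) ≤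
      3 * Real.sqrt (NN (2^j)) := by
  constructor
  · have hfin : {X : Set (VV (2^j)) | ConvexIn (R (2^j)) X}.Finite := Set.toFinite _
    rw [finsum_mem_eq_finite_toFinset_sum _ hfin, Set.ncard_eq_toFinset_card _ hfin]
    apply main_ineq j hj
    · intro C hC
      exact (Set.Finite.mem_toFinset hfin).mp hC
    · intro C hC
      rw [Set.Finite.mem_toFinset hfin]
      exact LB_convex (2^j) C hC
  · have hfin : {X : Set (VV (2^j)) | ConnectedIn (R (2^j)) X ∧
        ConvexIn (R (2^j)) X}.Finite := Set.toFinite _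
    rw [finsum_mem_eq_finite_toFinset_sum _ hfin, Set.ncard_eq_toFinset_card _ hfin]
    apply main_ineq j hj
    · intro C hC
      exact ((Set.Finite.mem_toFinset hfin).mp hC).2
    · intro C hC
      rw [Set.Finite.mem_toFinset hfin]
      exact ⟨LB_connected (2^j) C hC, LB_convex (2^j) C hC⟩

end
end S17

open Filter in
/-- There is a family of connected acyclic digraphs with orders tending to
infinity in which the average size of a convex set, and of a connected convex
set, is `O(√n)`. -/
theorem stmt_17 :
    ∃ (W : ℕ → Type) (A : ∀ k, W k → W k → Prop) (_ : ∀ k, Fintype (W k))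
      (c : ℝ), 0 < c ∧
      (∀ k, DigraphConnected (A k) ∧ AcyclicDigraph (A k)) ∧
      Tendsto (fun k => Fintype.card (W k)) atTop atTop ∧
      (∀ k,
        (∑ᶠ C ∈ {X : Set (W k) | ConvexIn (A k) X}, (C.ncard : ℝ)) /
            ({X : Set (W k) | ConvexIn (A k) X}.ncard : ℝ) ≤
          c * Real.sqrt (Fintype.card (W k)) ∧
        (∑ᶠ C ∈ {X : Set (W k) | ConnectedIn (A k) X ∧ ConvexIn (A k) X},
              (C.ncard : ℝ)) /
            ({X : Set (W k) | ConnectedIn (A k) X ∧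
                ConvexIn (A k) X}.ncard : ℝ) ≤
          c * Real.sqrt (Fintype.card (W k))) := by
  refine ⟨fun k => S17.VV (2^(k+6)), fun k => S17.R (2^(k+6)), fun k => inferInstance,
    3, by norm_num, ?_, ?_, ?_⟩
  · intro k
    exact ⟨S17.connected _ Nat.one_le_two_pow, S17.acyclic _⟩
  · apply Filter.tendsto_atTop_mono ?_ Filter.tendsto_id
    intro k
    simp only [id_eq]
    have h0 : Fintype.card (S17.VV (2^(k+6))) = S17.NN (2^(k+6)) := Fintype.card_fin _
    rw [h0]
    have h1 : k < 2^k := Nat.lt_two_pow_self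
    have h2 : (2:ℕ)^k ≤ 2^(k+6) := Nat.pow_le_pow_right (by norm_num) (by omega)
    have h3 : 2^(k+6) ≤ S17.NN (2^(k+6)) := by
      unfold S17.NN
      nlinarith [Nat.two_pow_pos (k+6)]
    omega
  · intro k
    have h0 : Fintype.card (S17.VV (2^(k+6))) = S17.NN (2^(k+6)) := Fintype.card_fin _
    rw [h0]
    exact S17.per_k (k+6) (by omega)
end
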